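/- arXiv:2505.03301 — 13 statements merged into one kernel-verified Lean document; each statement's English description precedes it below -/
import Mathlib

section
/- Let I, J be nonempty closed intervals in ℝ and let φ: J → I be well-regulated. Then for every regulated function f: I → ℝ, the composition f ∘ φ is regulated on J. -/
open Set Filter Topology

/-- `f` is regulated on the interval `I`: at every point of `I`, the one-sided limits
within `I` exist (whenever the corresponding one-sided within-`I` filter is nontrivial). -/
def RegulatedWithin (f : ℝ → ℝ) (I : Set ℝ) : Prop :=
  ∀ t₀ ∈ I,
    ((𝓝[I ∩ Set.Ioi t₀] t₀).NeBot → ∃ L : ℝ, Tendsto f (𝓝[I ∩ Set.Ioi t₀] t₀) (𝓝 L)) ∧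
    ((𝓝[I ∩ Set.Iio t₀] t₀).NeBot → ∃ L : ℝ, Tendsto f (𝓝[I ∩ Set.Iio t₀] t₀) (𝓝 L))

/-- `φ` is well-regulated on the interval `I`: it is regulated and, at every point `t₀` of `I`,
locally on each side of `t₀` (when nontrivial), `φ` is either everywhere strictly greater than,
everywhere equal to, or everywhere strictly less than the corresponding one-sided limit. -/
def WellRegulatedWithin (φ : ℝ → ℝ) (I : Set ℝ) : Prop :=
  RegulatedWithin φ I ∧
    ∀ t₀ ∈ I,
      ((𝓝[I ∩ Set.Ioi t₀] t₀).NeBot →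
        ∃ L : ℝ, Tendsto φ (𝓝[I ∩ Set.Ioi t₀] t₀) (𝓝 L) ∧
          ∃ ε > (0 : ℝ), (∀ t ∈ I ∩ Set.Ioo t₀ (t₀ + ε), L < φ t) ∨
            (∀ t ∈ I ∩ Set.Ioo t₀ (t₀ + ε), φ t = L) ∨
            (∀ t ∈ I ∩ Set.Ioo t₀ (t₀ + ε), φ t < L)) ∧
      ((𝓝[I ∩ Set.Iio t₀] t₀).NeBot →
        ∃ L : ℝ, Tendsto φ (𝓝[I ∩ Set.Iio t₀] t₀) (𝓝 L) ∧
          ∃ ε > (0 : ℝ), (∀ t ∈ I ∩ Set.Ioo (t₀ - ε) t₀, L < φ t) ∨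
            (∀ t ∈ I ∩ Set.Ioo (t₀ - ε) t₀, φ t = L) ∨
            (∀ t ∈ I ∩ Set.Ioo (t₀ - ε) t₀, φ t < L))

lemma key_comp (I : Set ℝ) (hIcl : IsClosed I) (f : ℝ → ℝ) (hf : RegulatedWithin f I)
    (φ : ℝ → ℝ) (F : Filter ℝ) [hF : F.NeBot] (hmem : ∀ᶠ t in F, φ t ∈ I)
    (L : ℝ) (hL : Tendsto φ F (𝓝 L))
    (htri : (∀ᶠ t in F, L < φ t) ∨ (∀ᶠ t in F, φ t = L) ∨ (∀ᶠ t in F, φ t < L)) :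
    ∃ M, Tendsto (f ∘ φ) F (𝓝 M) := by
  have hLI : L ∈ I := hIcl.mem_of_tendsto hL hmem
  rcases htri with h | h | h
  · have hT : Tendsto φ F (𝓝[I ∩ Set.Ioi L] L) := by
      rw [tendsto_nhdsWithin_iff]
      exact ⟨hL, hmem.and h |>.mono fun t ht => ⟨ht.1, ht.2⟩⟩
    have hnb : (𝓝[I ∩ Set.Ioi L] L).NeBot := neBot_of_le hT
    obtain ⟨M, hM⟩ := (hf L hLI).1 hnb
    exact ⟨M, hM.comp hT⟩
  · refine ⟨f L, Tendsto.congr' ?_ tendsto_const_nhds⟩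
    filter_upwards [h] with t ht
    simp [Function.comp, ht]
  · have hT : Tendsto φ F (𝓝[I ∩ Set.Iio L] L) := by
      rw [tendsto_nhdsWithin_iff]
      exact ⟨hL, hmem.and h |>.mono fun t ht => ⟨ht.1, ht.2⟩⟩
    have hnb : (𝓝[I ∩ Set.Iio L] L).NeBot := neBot_of_le hT
    obtain ⟨M, hM⟩ := (hf L hLI).2 hnb
    exact ⟨M, hM.comp hT⟩

/-- If `I, J` are nonempty closed intervals and `φ : J → I` is well-regulated, then for every
regulated `f : I → ℝ`, the composition `f ∘ φ` is regulated on `J`. -/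
theorem stmt_1 (I J : Set ℝ) (hIne : I.Nonempty) (hJne : J.Nonempty)
    (hIcl : IsClosed I) (hJcl : IsClosed J) (hIoc : I.OrdConnected) (hJoc : J.OrdConnected)
    (φ : ℝ → ℝ) (hφmaps : Set.MapsTo φ J I) (hφ : WellRegulatedWithin φ J) :
    ∀ f : ℝ → ℝ, RegulatedWithin f I → RegulatedWithin (f ∘ φ) J := by
  intro f hf t₀ ht₀
  have hmem : ∀ᶠ t in 𝓝[J ∩ Set.Ioi t₀] t₀, φ t ∈ I := by
    filter_upwards [eventually_mem_nhdsWithin] with t ht using hφmaps ht.1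
  have hmem' : ∀ᶠ t in 𝓝[J ∩ Set.Iio t₀] t₀, φ t ∈ I := by
    filter_upwards [eventually_mem_nhdsWithin] with t ht using hφmaps ht.1
  constructor
  · intro hnb
    obtain ⟨L, hL, ε, hε, htri⟩ := (hφ.2 t₀ ht₀).1 hnb
    have hsmall : ∀ᶠ t in 𝓝[J ∩ Set.Ioi t₀] t₀, t ∈ J ∩ Set.Ioo t₀ (t₀ + ε) := by
      have h1 : Set.Iio (t₀ + ε) ∈ 𝓝 t₀ := Iio_mem_nhds (by linarith)
      filter_upwards [eventually_mem_nhdsWithin, eventually_nhdsWithin_of_eventually_nhds h1]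
        with t ht h2 using ⟨ht.1, ht.2, h2⟩
    refine key_comp I hIcl f hf φ _ hmem L hL ?_
    rcases htri with h | h | h
    · exact Or.inl (hsmall.mono fun t ht => h t ht)
    · exact Or.inr (Or.inl (hsmall.mono fun t ht => h t ht))
    · exact Or.inr (Or.inr (hsmall.mono fun t ht => h t ht))
  · intro hnb
    obtain ⟨L, hL, ε, hε, htri⟩ := (hφ.2 t₀ ht₀).2 hnb
    have hsmall : ∀ᶠ t in 𝓝[J ∩ Set.Iio t₀] t₀, t ∈ J ∩ Set.Ioo (t₀ - ε) t₀ := by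
      have h1 : Set.Ioi (t₀ - ε) ∈ 𝓝 t₀ := Ioi_mem_nhds (by linarith)
      filter_upwards [eventually_mem_nhdsWithin, eventually_nhdsWithin_of_eventually_nhds h1]
        with t ht h2 using ⟨ht.1, h2, ht.2⟩
    refine key_comp I hIcl f hf φ _ hmem' L hL ?_
    rcases htri with h | h | h
    · exact Or.inl (hsmall.mono fun t ht => h t ht)
    · exact Or.inr (Or.inl (hsmall.mono fun t ht => h t ht))
    · exact Or.inr (Or.inr (hsmall.mono fun t ht => h t ht))
end

section
/- Let I, J be nonempty closed intervals in ℝ and φ: J → I a function such that f ∘ φ is regulated for every regulated function f: I → ℝ. Then φ is well-regulated. -/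
open Set Filter Topology

private noncomputable def f1 (L : ℝ) : ℝ → ℝ := fun x => if x = L then 1 else 0
private noncomputable def f2 (L : ℝ) : ℝ → ℝ := fun x => if L < x then 1 else 0

private lemma tendsto_of_eventually_eq {g : ℝ → ℝ} {l : Filter ℝ} {c : ℝ}
    (h : ∀ᶠ x in l, g x = c) : Tendsto g l (𝓝 c) :=
  tendsto_const_nhds.congr' (h.mono fun _ hx => hx.symm)

private lemma f1_reg (L : ℝ) (I : Set ℝ) : RegulatedWithin (f1 L) I := by
  intro t₀ _
  constructor
  · intro _
    refine ⟨0, tendsto_of_eventually_eq ?_⟩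
    rcases le_or_gt L t₀ with h | h
    · filter_upwards [self_mem_nhdsWithin] with x hx
      simp only [f1, if_neg (by exact ne_of_gt (lt_of_le_of_lt h hx.2))]
    · have : ∀ᶠ x in 𝓝[I ∩ Set.Ioi t₀] t₀, x < L :=
        eventually_nhdsWithin_of_eventually_nhds (Filter.Tendsto.eventually_lt_const h tendsto_id)
      filter_upwards [this] with x hx
      simp only [f1, if_neg (ne_of_lt hx)]
  · intro _
    refine ⟨0, tendsto_of_eventually_eq ?_⟩
    rcases lt_or_ge t₀ L with h | h
    · filter_upwards [self_mem_nhdsWithin] with x hx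
      simp only [f1, if_neg (by exact ne_of_lt (lt_trans hx.2 h))]
    · rcases eq_or_lt_of_le h with rfl | h
      · filter_upwards [self_mem_nhdsWithin] with x hx
        simp only [f1, if_neg (show x ≠ L from ne_of_lt hx.2)]
      · have : ∀ᶠ x in 𝓝[I ∩ Set.Iio t₀] t₀, L < x :=
          eventually_nhdsWithin_of_eventually_nhds (Filter.Tendsto.eventually_const_lt h tendsto_id)
        filter_upwards [this] with x hx
        simp only [f1, if_neg (ne_of_gt hx)]

private lemma f2_reg (L : ℝ) (I : Set ℝ) : RegulatedWithin (f2 L) I := by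
  intro t₀ _
  constructor
  · intro _
    rcases le_or_gt L t₀ with h | h
    · refine ⟨1, tendsto_of_eventually_eq ?_⟩
      filter_upwards [self_mem_nhdsWithin] with x hx
      simp only [f2, if_pos (lt_of_le_of_lt h hx.2)]
    · refine ⟨0, tendsto_of_eventually_eq ?_⟩
      have : ∀ᶠ x in 𝓝[I ∩ Set.Ioi t₀] t₀, x < L :=
        eventually_nhdsWithin_of_eventually_nhds (Filter.Tendsto.eventually_lt_const h tendsto_id)
      filter_upwards [this] with x hx
      simp only [f2, if_neg (not_lt.mpr (le_of_lt hx))]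
  · intro _
    rcases le_or_gt t₀ L with h | h
    · refine ⟨0, tendsto_of_eventually_eq ?_⟩
      filter_upwards [self_mem_nhdsWithin] with x hx
      simp only [f2, if_neg (not_lt.mpr (le_of_lt (lt_of_lt_of_le hx.2 h)))]
    · refine ⟨1, tendsto_of_eventually_eq ?_⟩
      have : ∀ᶠ x in 𝓝[I ∩ Set.Iio t₀] t₀, L < x :=
        eventually_nhdsWithin_of_eventually_nhds (Filter.Tendsto.eventually_const_lt h tendsto_id)
      filter_upwards [this] with x hx
      simp only [f2, if_pos hx]

private lemma key {l : Filter ℝ} [l.NeBot] {φ : ℝ → ℝ} {L : ℝ}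
    (h1 : ∃ M, Tendsto (f1 L ∘ φ) l (𝓝 M))
    (h2 : ∃ M, Tendsto (f2 L ∘ φ) l (𝓝 M)) :
    (∀ᶠ t in l, L < φ t) ∨ (∀ᶠ t in l, φ t = L) ∨ (∀ᶠ t in l, φ t < L) := by
  obtain ⟨M₁, hM₁⟩ := h1
  obtain ⟨M₂, hM₂⟩ := h2
  by_cases heq : ∀ᶠ t in l, φ t = L
  · exact Or.inr (Or.inl heq)
  -- frequently φ t ≠ L
  have hfne : ∃ᶠ t in l, φ t ≠ L := Filter.not_eventually.mp heq
  -- then eventually φ t ≠ L, else M₁ = 0 and M₁ = 1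
  have hene : ∀ᶠ t in l, φ t ≠ L := by
    by_contra hc
    have hfeq : ∃ᶠ t in l, φ t = L := (Filter.not_eventually.mp hc).mono fun _ h => not_not.mp h
    have e1 : M₁ = (1 : ℝ) :=
      tendsto_nhds_unique_of_frequently_eq hM₁ tendsto_const_nhds
        (hfeq.mono fun t ht => by simp [f1, Function.comp, ht])
    have e0 : M₁ = (0 : ℝ) :=
      tendsto_nhds_unique_of_frequently_eq hM₁ tendsto_const_nhds
        (hfne.mono fun t ht => by simp [f1, Function.comp, ht])
    rw [e1] at e0; norm_num at e0
  by_cases hgt : ∀ᶠ t in l, L < φ t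
  · exact Or.inl hgt
  have hfle : ∃ᶠ t in l, ¬ L < φ t := Filter.not_eventually.mp hgt
  have hele : ∀ᶠ t in l, ¬ L < φ t := by
    by_contra hc
    have hfgt : ∃ᶠ t in l, L < φ t := (Filter.not_eventually.mp hc).mono fun _ h => not_not.mp h
    have e1 : M₂ = (1 : ℝ) :=
      tendsto_nhds_unique_of_frequently_eq hM₂ tendsto_const_nhds
        (hfgt.mono fun t ht => by simp [f2, Function.comp, ht])
    have e0 : M₂ = (0 : ℝ) :=
      tendsto_nhds_unique_of_frequently_eq hM₂ tendsto_const_nhds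
        (hfle.mono fun t ht => by simp [f2, Function.comp, ht])
    rw [e1] at e0; norm_num at e0
  refine Or.inr (Or.inr ?_)
  filter_upwards [hene, hele] with t h1 h2
  exact lt_of_le_of_ne (not_lt.mp h2) h1

private lemma id_reg (I : Set ℝ) : RegulatedWithin id I := by
  intro t₀ _
  exact ⟨fun _ => ⟨t₀, tendsto_id.mono_left nhdsWithin_le_nhds⟩,
         fun _ => ⟨t₀, tendsto_id.mono_left nhdsWithin_le_nhds⟩⟩

private lemma eps_right {J : Set ℝ} {t₀ : ℝ} {p : ℝ → Prop}
    (h : ∀ᶠ t in 𝓝[J ∩ Set.Ioi t₀] t₀, p t) :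
    ∃ ε > (0:ℝ), ∀ t ∈ J ∩ Set.Ioo t₀ (t₀ + ε), p t := by
  rw [eventually_nhdsWithin_iff, Metric.eventually_nhds_iff] at h
  obtain ⟨ε, hε, h⟩ := h
  refine ⟨ε, hε, fun t ht => h ?_ ⟨ht.1, ht.2.1⟩⟩
  rw [Real.dist_eq, abs_lt]
  exact ⟨by linarith [ht.2.1], by linarith [ht.2.2]⟩

private lemma eps_left {J : Set ℝ} {t₀ : ℝ} {p : ℝ → Prop}
    (h : ∀ᶠ t in 𝓝[J ∩ Set.Iio t₀] t₀, p t) :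
    ∃ ε > (0:ℝ), ∀ t ∈ J ∩ Set.Ioo (t₀ - ε) t₀, p t := by
  rw [eventually_nhdsWithin_iff, Metric.eventually_nhds_iff] at h
  obtain ⟨ε, hε, h⟩ := h
  refine ⟨ε, hε, fun t ht => h ?_ ⟨ht.1, ht.2.2⟩⟩
  rw [Real.dist_eq, abs_lt]
  exact ⟨by linarith [ht.2.1], by linarith [ht.2.2]⟩

/-- If `I, J` are nonempty closed intervals and `φ : J → I` is such that `f ∘ φ` is regulated
on `J` for every regulated `f : I → ℝ`, then `φ` is well-regulated on `J`. -/
theorem stmt_2 (I J : Set ℝ) (hIne : I.Nonempty) (hJne : J.Nonempty)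
    (hIcl : IsClosed I) (hJcl : IsClosed J) (hIoc : I.OrdConnected) (hJoc : J.OrdConnected)
    (φ : ℝ → ℝ) (hφmaps : Set.MapsTo φ J I)
    (hcomp : ∀ f : ℝ → ℝ, RegulatedWithin f I → RegulatedWithin (f ∘ φ) J) :
    WellRegulatedWithin φ J := by
  have hφreg : RegulatedWithin φ J := hcomp id (id_reg I)
  refine ⟨hφreg, fun t₀ ht₀ => ⟨?_, ?_⟩⟩
  · intro hne
    haveI := hne
    obtain ⟨L, hL⟩ := (hφreg t₀ ht₀).1 hne
    refine ⟨L, hL, ?_⟩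
    have h1 := (hcomp (f1 L) (f1_reg L I) t₀ ht₀).1 hne
    have h2 := (hcomp (f2 L) (f2_reg L I) t₀ ht₀).1 hne
    rcases key h1 h2 with h | h | h
    · obtain ⟨ε, hε, hh⟩ := eps_right h; exact ⟨ε, hε, Or.inl hh⟩
    · obtain ⟨ε, hε, hh⟩ := eps_right h; exact ⟨ε, hε, Or.inr (Or.inl hh)⟩
    · obtain ⟨ε, hε, hh⟩ := eps_right h; exact ⟨ε, hε, Or.inr (Or.inr hh)⟩
  · intro hne
    haveI := hne
    obtain ⟨L, hL⟩ := (hφreg t₀ ht₀).2 hne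
    refine ⟨L, hL, ?_⟩
    have h1 := (hcomp (f1 L) (f1_reg L I) t₀ ht₀).2 hne
    have h2 := (hcomp (f2 L) (f2_reg L I) t₀ ht₀).2 hne
    rcases key h1 h2 with h | h | h
    · obtain ⟨ε, hε, hh⟩ := eps_left h; exact ⟨ε, hε, Or.inl hh⟩
    · obtain ⟨ε, hε, hh⟩ := eps_left h; exact ⟨ε, hε, Or.inr (Or.inl hh)⟩
    · obtain ⟨ε, hε, hh⟩ := eps_left h; exact ⟨ε, hε, Or.inr (Or.inr hh)⟩
end

section
/- There exist well-regulated functions f, g: ℝ → ℝ whose sum f + g is not well-regulated. Concretely, f defined by f(0) = 0 and f(t) = -t·(1 - (1/2)·sin(1/t)) for t ≠ 0 is well-regulated, the identity function is well-regulated, but f + id is not well-regulated. -/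
open Set Filter Topology

/-- `f : ℝ → ℝ` is well-regulated: at every point both one-sided limits exist and, locally on
each side, `f` is either everywhere strictly greater than, everywhere equal to, or everywhere
strictly less than the corresponding one-sided limit. -/
def WellRegulated (f : ℝ → ℝ) : Prop :=
  ∀ t₀ : ℝ,
    (∃ L : ℝ, Tendsto f (𝓝[>] t₀) (𝓝 L) ∧
      ∃ ε > (0 : ℝ), (∀ t ∈ Set.Ioo t₀ (t₀ + ε), L < f t) ∨
        (∀ t ∈ Set.Ioo t₀ (t₀ + ε), f t = L) ∨
        (∀ t ∈ Set.Ioo t₀ (t₀ + ε), f t < L)) ∧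
    (∃ L : ℝ, Tendsto f (𝓝[<] t₀) (𝓝 L) ∧
      ∃ ε > (0 : ℝ), (∀ t ∈ Set.Ioo (t₀ - ε) t₀, L < f t) ∨
        (∀ t ∈ Set.Ioo (t₀ - ε) t₀, f t = L) ∨
        (∀ t ∈ Set.Ioo (t₀ - ε) t₀, f t < L))


lemma analyticAt_rsin (x : ℝ) : AnalyticAt ℝ Real.sin x := by
  have h1 : AnalyticAt ℂ Complex.sin (x : ℂ) := Complex.differentiable_sin.analyticAt _
  have h2 : AnalyticAt ℝ (fun t : ℝ => Complex.reCLM (Complex.sin (Complex.ofRealCLM t))) x :=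
    (Complex.reCLM.analyticAt _).comp ((h1.restrictScalars).comp (Complex.ofRealCLM.analyticAt x))
  have : Real.sin = fun t : ℝ => Complex.reCLM (Complex.sin (Complex.ofRealCLM t)) := by
    funext t; simp [← Complex.ofReal_sin]
  rw [this]; exact h2

lemma sign_const {g : ℝ → ℝ} {a b : ℝ} (hc : ContinuousOn g (Ioo a b))
    (hne : ∀ t ∈ Ioo a b, g t ≠ 0) :
    (∀ t ∈ Ioo a b, 0 < g t) ∨ ∀ t ∈ Ioo a b, g t < 0 := by
  by_contra h
  push_neg at h
  obtain ⟨⟨x, hx, hx0⟩, ⟨y, hy, hy0⟩⟩ := h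
  rcases le_total x y with hxy | hxy
  · have hsub : Icc x y ⊆ Ioo a b := Icc_subset_Ioo hx.1 hy.2
    obtain ⟨z, hz, hz0⟩ := intermediate_value_Icc hxy (hc.mono hsub)
      (⟨hx0, hy0⟩ : (0:ℝ) ∈ Icc (g x) (g y))
    exact hne z (hsub hz) hz0
  · have hsub : Icc y x ⊆ Ioo a b := Icc_subset_Ioo hy.1 hx.2
    obtain ⟨z, hz, hz0⟩ := intermediate_value_Icc' hxy (hc.mono hsub)
      (⟨hx0, hy0⟩ : (0:ℝ) ∈ Icc (g x) (g y))
    exact hne z (hsub hz) hz0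

lemma right_reg {f : ℝ → ℝ} {t₀ : ℝ} (hana : AnalyticAt ℝ f t₀) :
    ∃ L : ℝ, Tendsto f (𝓝[>] t₀) (𝓝 L) ∧
      ∃ ε > (0 : ℝ), (∀ t ∈ Set.Ioo t₀ (t₀ + ε), L < f t) ∨
        (∀ t ∈ Set.Ioo t₀ (t₀ + ε), f t = L) ∨
        (∀ t ∈ Set.Ioo t₀ (t₀ + ε), f t < L) := by
  refine ⟨f t₀, hana.continuousAt.tendsto.mono_left nhdsWithin_le_nhds, ?_⟩
  have hg : AnalyticAt ℝ (fun t => f t - f t₀) t₀ := hana.sub analyticAt_const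
  rcases hg.eventually_eq_zero_or_eventually_ne_zero with h | h
  · rw [Metric.eventually_nhds_iff] at h
    obtain ⟨ε, hε, hh⟩ := h
    refine ⟨ε, hε, Or.inr (Or.inl fun t ht => ?_)⟩
    have hd : dist t t₀ < ε := by
      rw [Real.dist_eq, abs_of_pos (sub_pos.2 ht.1)]; linarith [ht.2]
    have := hh hd
    simpa [sub_eq_zero] using this
  · have hcont : ∀ᶠ t in 𝓝 t₀, ContinuousAt f t :=
      hana.eventually_analyticAt.mono fun t ht => ht.continuousAt
    have hcomb : ∀ᶠ t in 𝓝[≠] t₀, f t - f t₀ ≠ 0 ∧ ContinuousAt f t :=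
      h.and (hcont.filter_mono nhdsWithin_le_nhds)
    rw [eventually_nhdsWithin_iff, Metric.eventually_nhds_iff] at hcomb
    obtain ⟨ε, hε, hh⟩ := hcomb
    have hmem : ∀ t ∈ Ioo t₀ (t₀ + ε), (f t - f t₀ ≠ 0 ∧ ContinuousAt f t) := by
      intro t ht
      have hd : dist t t₀ < ε := by
        rw [Real.dist_eq, abs_of_pos (sub_pos.2 ht.1)]; linarith [ht.2]
      exact hh hd (ne_of_gt ht.1)
    have hcc : ContinuousOn (fun t => f t - f t₀) (Ioo t₀ (t₀ + ε)) := fun t ht =>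
      (((hmem t ht).2).sub continuousAt_const).continuousWithinAt
    rcases sign_const hcc (fun t ht => (hmem t ht).1) with hpos | hneg
    · exact ⟨ε, hε, Or.inl fun t ht => by linarith [hpos t ht]⟩
    · exact ⟨ε, hε, Or.inr (Or.inr fun t ht => by linarith [hneg t ht])⟩

lemma left_reg {f : ℝ → ℝ} {t₀ : ℝ} (hana : AnalyticAt ℝ f t₀) :
    ∃ L : ℝ, Tendsto f (𝓝[<] t₀) (𝓝 L) ∧
      ∃ ε > (0 : ℝ), (∀ t ∈ Set.Ioo (t₀ - ε) t₀, L < f t) ∨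
        (∀ t ∈ Set.Ioo (t₀ - ε) t₀, f t = L) ∨
        (∀ t ∈ Set.Ioo (t₀ - ε) t₀, f t < L) := by
  refine ⟨f t₀, hana.continuousAt.tendsto.mono_left nhdsWithin_le_nhds, ?_⟩
  have hg : AnalyticAt ℝ (fun t => f t - f t₀) t₀ := hana.sub analyticAt_const
  rcases hg.eventually_eq_zero_or_eventually_ne_zero with h | h
  · rw [Metric.eventually_nhds_iff] at h
    obtain ⟨ε, hε, hh⟩ := h
    refine ⟨ε, hε, Or.inr (Or.inl fun t ht => ?_)⟩
    have hd : dist t t₀ < ε := by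
      rw [Real.dist_eq, abs_of_neg (sub_neg.2 ht.2)]; linarith [ht.1]
    have := hh hd
    simpa [sub_eq_zero] using this
  · have hcont : ∀ᶠ t in 𝓝 t₀, ContinuousAt f t :=
      hana.eventually_analyticAt.mono fun t ht => ht.continuousAt
    have hcomb : ∀ᶠ t in 𝓝[≠] t₀, f t - f t₀ ≠ 0 ∧ ContinuousAt f t :=
      h.and (hcont.filter_mono nhdsWithin_le_nhds)
    rw [eventually_nhdsWithin_iff, Metric.eventually_nhds_iff] at hcomb
    obtain ⟨ε, hε, hh⟩ := hcomb
    have hmem : ∀ t ∈ Ioo (t₀ - ε) t₀, (f t - f t₀ ≠ 0 ∧ ContinuousAt f t) := by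
      intro t ht
      have hd : dist t t₀ < ε := by
        rw [Real.dist_eq, abs_of_neg (sub_neg.2 ht.2)]; linarith [ht.1]
      exact hh hd (ne_of_lt ht.2)
    have hcc : ContinuousOn (fun t => f t - f t₀) (Ioo (t₀ - ε) t₀) := fun t ht =>
      (((hmem t ht).2).sub continuousAt_const).continuousWithinAt
    rcases sign_const hcc (fun t ht => (hmem t ht).1) with hpos | hneg
    · exact ⟨ε, hε, Or.inl fun t ht => by linarith [hpos t ht]⟩
    · exact ⟨ε, hε, Or.inr (Or.inr fun t ht => by linarith [hneg t ht])⟩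

/-- The function `f` with `f(0) = 0` and `f(t) = -t·(1 - (1/2)·sin(1/t))` for `t ≠ 0` is
well-regulated, the identity is well-regulated, but `f + id` is not well-regulated. -/
theorem stmt_3 (f : ℝ → ℝ) (hf0 : f 0 = 0)
    (hf : ∀ t : ℝ, t ≠ 0 → f t = -t * (1 - (1 / 2) * Real.sin (1 / t))) :
    WellRegulated f ∧ WellRegulated (fun t : ℝ => t) ∧
      ¬ WellRegulated (fun t : ℝ => f t + t) := by
  -- bounds for f
  have hub : ∀ t : ℝ, 0 < t → f t ≤ -(1/2) * t := by
    intro t ht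
    rw [hf t (ne_of_gt ht)]
    nlinarith [Real.neg_one_le_sin (1/t), Real.sin_le_one (1/t)]
  have hlb : ∀ t : ℝ, 0 < t → -(3/2) * t ≤ f t := by
    intro t ht
    rw [hf t (ne_of_gt ht)]
    nlinarith [Real.neg_one_le_sin (1/t), Real.sin_le_one (1/t)]
  have hub' : ∀ t : ℝ, t < 0 → f t ≤ -(3/2) * t := by
    intro t ht
    rw [hf t (ne_of_lt ht)]
    nlinarith [Real.neg_one_le_sin (1/t), Real.sin_le_one (1/t)]
  have hlb' : ∀ t : ℝ, t < 0 → -(1/2) * t ≤ f t := by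
    intro t ht
    rw [hf t (ne_of_lt ht)]
    nlinarith [Real.neg_one_le_sin (1/t), Real.sin_le_one (1/t)]
  have tend_const : ∀ (c : ℝ) (l : Filter ℝ), l ≤ 𝓝 0 → Tendsto (fun t : ℝ => c * t) l (𝓝 0) := by
    intro c l hl
    have : Tendsto (fun t : ℝ => c * t) (𝓝 0) (𝓝 (c * 0)) :=
      (continuous_const.mul continuous_id).tendsto 0
    rw [mul_zero] at this
    exact this.mono_left hl
  refine ⟨?_, ?_, ?_⟩
  · -- f well regulated
    intro t₀
    by_cases ht₀ : t₀ = 0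
    · subst ht₀
      constructor
      · refine ⟨0, ?_, 1, one_pos, Or.inr (Or.inr fun t ht => ?_)⟩
        · refine tendsto_of_tendsto_of_tendsto_of_le_of_le'
            (tend_const (-(3/2)) _ nhdsWithin_le_nhds)
            (tend_const (-(1/2)) _ nhdsWithin_le_nhds) ?_ ?_
          · filter_upwards [self_mem_nhdsWithin] with t (ht : t ∈ Ioi 0)
            exact hlb t ht
          · filter_upwards [self_mem_nhdsWithin] with t (ht : t ∈ Ioi 0)
            exact hub t ht
        · have := hub t (by simpa using ht.1)
          have ht' : (0:ℝ) < t := by simpa using ht.1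
          linarith
      · refine ⟨0, ?_, 1, one_pos, Or.inl fun t ht => ?_⟩
        · refine tendsto_of_tendsto_of_tendsto_of_le_of_le'
            (tend_const (-(1/2)) _ nhdsWithin_le_nhds)
            (tend_const (-(3/2)) _ nhdsWithin_le_nhds) ?_ ?_
          · filter_upwards [self_mem_nhdsWithin] with t (ht : t ∈ Iio 0)
            exact hlb' t ht
          · filter_upwards [self_mem_nhdsWithin] with t (ht : t ∈ Iio 0)
            exact hub' t ht
        · have := hlb' t (by simpa using ht.2)
          have ht' : t < (0:ℝ) := by simpa using ht.2
          linarith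
    · have hF : AnalyticAt ℝ (fun t : ℝ => -t * (1 - (1 / 2) * Real.sin (1 / t))) t₀ := by
        exact (analyticAt_id.neg).mul (analyticAt_const.sub (analyticAt_const.mul
          ((analyticAt_rsin _).comp (analyticAt_const.div analyticAt_id ht₀))))
      have hana : AnalyticAt ℝ f t₀ := by
        refine hF.congr ?_
        filter_upwards [eventually_ne_nhds ht₀] with t ht
        exact (hf t ht).symm
      exact ⟨right_reg hana, left_reg hana⟩
  · -- id well regulated
    intro t₀
    exact ⟨right_reg analyticAt_id, left_reg analyticAt_id⟩
  · -- f + id not well regulated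
    intro H
    set h : ℝ → ℝ := fun t => f t + t with hh
    have hval : ∀ t : ℝ, t ≠ 0 → h t = t / 2 * Real.sin (1 / t) := by
      intro t ht
      simp only [hh, hf t ht]; ring
    obtain ⟨L, hL, ε, hε, hcase⟩ := (H 0).1
    -- L = 0
    have hL0 : L = 0 := by
      have ht0 : Tendsto h (𝓝[>] 0) (𝓝 0) := by
        refine tendsto_of_tendsto_of_tendsto_of_le_of_le'
          (tend_const (-(1/2)) _ nhdsWithin_le_nhds)
          (tend_const (1/2) _ nhdsWithin_le_nhds) ?_ ?_
        · filter_upwards [self_mem_nhdsWithin] with t (ht : t ∈ Ioi 0)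
          have := hlb t ht
          simp only [hh]; linarith
        · filter_upwards [self_mem_nhdsWithin] with t (ht : t ∈ Ioi 0)
          have := hub t ht
          simp only [hh]; linarith
      exact tendsto_nhds_unique hL ht0
    subst hL0
    -- pick n with 1/(n π) < ε
    obtain ⟨n, hn⟩ := exists_nat_gt (1 / (ε * Real.pi))
    have hπ := Real.pi_pos
    have hn1 : (0:ℝ) < (n:ℝ) + 1 := by positivity
    set t₁ : ℝ := 1 / (((n:ℝ) + 1) * Real.pi) with ht₁def
    have ht₁pos : 0 < t₁ := by positivity
    have ht₁lt : t₁ < ε := by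
      rw [ht₁def, div_lt_iff₀ (by positivity)]
      have : 1 / (ε * Real.pi) < (n:ℝ) + 1 := lt_of_lt_of_le hn (by linarith)
      rw [div_lt_iff₀ (by positivity)] at this
      nlinarith
    have ht₁val : h t₁ = 0 := by
      rw [hval t₁ (ne_of_gt ht₁pos), ht₁def, one_div_one_div]
      have : Real.sin ((((n:ℝ)+1)) * Real.pi) = 0 := by
        have := Real.sin_nat_mul_pi (n + 1)
        push_cast at this ⊢
        convert this using 2
      rw [this, mul_zero]
    set t₂ : ℝ := 1 / (Real.pi / 2 + ((n:ℝ) + 1) * (2 * Real.pi)) with ht₂def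
    have ht₂den : (0:ℝ) < Real.pi / 2 + ((n:ℝ) + 1) * (2 * Real.pi) := by positivity
    have ht₂pos : 0 < t₂ := by positivity
    have ht₂lt : t₂ < ε := by
      have h1 : t₂ < t₁ := by
        rw [ht₁def, ht₂def]
        apply one_div_lt_one_div_of_lt (by positivity)
        nlinarith
      linarith
    have ht₂val : 0 < h t₂ := by
      rw [hval t₂ (ne_of_gt ht₂pos), ht₂def, one_div_one_div]
      have hs : Real.sin (Real.pi / 2 + ((n:ℝ) + 1) * (2 * Real.pi)) = 1 := by
        have := Real.sin_add_nat_mul_two_pi (Real.pi / 2) (n + 1)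
        push_cast at this
        rw [this, Real.sin_pi_div_two]
      rw [hs, mul_one]
      positivity
    have ht₁mem : t₁ ∈ Ioo (0:ℝ) (0 + ε) := ⟨ht₁pos, by linarith⟩
    have ht₂mem : t₂ ∈ Ioo (0:ℝ) (0 + ε) := ⟨ht₂pos, by linarith⟩
    rcases hcase with hc | hc | hc
    · have := hc t₁ ht₁mem; rw [ht₁val] at this; exact lt_irrefl _ this
    · have := hc t₂ ht₂mem; rw [this] at ht₂val; exact lt_irrefl _ ht₂val
    · have := hc t₁ ht₁mem; rw [ht₁val] at this; exact lt_irrefl _ this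
end

section
/- Let X₁ ⊆ ℝ^{d₁}, X₂ ⊆ ℝ^{d₂}, m ∈ ℕ*, and g: X₁ → X₂. Then g is Lebesgue-Lebesgue measurable if and only if for every Lebesgue-Borel measurable f: X₂ → ℝ^m, the composition f ∘ g is Lebesgue-Borel measurable. -/
open MeasureTheory Set

/-- A set `A` is Lebesgue measurable in the subspace `X` (trace of the Lebesgue σ-algebra,
i.e. of the completion of the Borel σ-algebra w.r.t. Lebesgue measure) if it coincides,
within `X`, with an ambient Lebesgue measurable (= null measurable) set. -/
def TraceLebesgueMeasurable {d : ℕ} (X A : Set (Fin d → ℝ)) : Prop :=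
  ∃ S : Set (Fin d → ℝ), NullMeasurableSet S (volume : Measure (Fin d → ℝ)) ∧ X ∩ A = X ∩ S

/-- `f : X → ℝ^m` is (𝔏, 𝔅)-measurable: the preimage of every Borel set is Lebesgue
measurable in `X`. -/
def LBMeasurableOn {d m : ℕ} (f : (Fin d → ℝ) → (Fin m → ℝ)) (X : Set (Fin d → ℝ)) : Prop :=
  ∀ B : Set (Fin m → ℝ), MeasurableSet B → TraceLebesgueMeasurable X (f ⁻¹' B)

/-- Let `X₁ ⊆ ℝ^{d₁}`, `X₂ ⊆ ℝ^{d₂}`, `m ≥ 1`, and `g : X₁ → X₂`. Then `g` is (𝔏, 𝔏)-measurable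
if and only if for every (𝔏, 𝔅)-measurable `f : X₂ → ℝ^m`, the composition `f ∘ g`
is (𝔏, 𝔅)-measurable. -/
theorem stmt_4 {d₁ d₂ m : ℕ} (hm : 0 < m)
    (X₁ : Set (Fin d₁ → ℝ)) (X₂ : Set (Fin d₂ → ℝ))
    (g : (Fin d₁ → ℝ) → (Fin d₂ → ℝ)) (hg : Set.MapsTo g X₁ X₂) :
    (∀ A : Set (Fin d₂ → ℝ), A ⊆ X₂ → TraceLebesgueMeasurable X₂ A →
        TraceLebesgueMeasurable X₁ (g ⁻¹' A)) ↔
      (∀ f : (Fin d₂ → ℝ) → (Fin m → ℝ), LBMeasurableOn f X₂ → LBMeasurableOn (f ∘ g) X₁) := by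
  constructor
  · intro h f hf B hB
    obtain ⟨S₀, hS₀, hXS₀⟩ := hf B hB
    obtain ⟨S, hS, hXS⟩ := h (X₂ ∩ f ⁻¹' B) inter_subset_left
      ⟨S₀, hS₀, by rw [← inter_assoc, inter_self, hXS₀]⟩
    refine ⟨S, hS, ?_⟩
    rw [← hXS]
    ext x
    simp only [mem_inter_iff, mem_preimage, Function.comp_apply]
    exact and_congr_right fun hx => by simp [hg hx]
  · rintro h A hA ⟨S, hS, hXS⟩
    set c : Fin m → ℝ := fun _ => 1 with hcdef
    have hc : c ≠ 0 := by
      intro hc0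
      have := congrFun hc0 ⟨0, hm⟩
      simp [hcdef] at this
    set f : (Fin d₂ → ℝ) → (Fin m → ℝ) := S.indicator (fun _ => c) with hfdef
    have hfS : ∀ y, f y = c ↔ y ∈ S := by
      intro y
      simp only [hfdef, indicator]
      split_ifs with hy <;> simp [hy, hc, Ne.symm hc]
    have hfmeas : LBMeasurableOn f X₂ := by
      intro B hB
      refine ⟨f ⁻¹' B, ?_, rfl⟩
      by_cases h1 : c ∈ B <;> by_cases h0 : (0 : Fin m → ℝ) ∈ B
      · have : f ⁻¹' B = univ := by
          ext y; simp only [mem_preimage, mem_univ, iff_true, hfdef, indicator]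
          split_ifs <;> assumption
        rw [this]; exact nullMeasurableSet_univ
      · have : f ⁻¹' B = S := by
          ext y; simp only [mem_preimage, hfdef, indicator]
          split_ifs with hy <;> simp [hy, h1, h0]
        rw [this]; exact hS
      · have : f ⁻¹' B = Sᶜ := by
          ext y; simp only [mem_preimage, mem_compl_iff, hfdef, indicator]
          split_ifs with hy <;> simp [hy, h1, h0]
        rw [this]; exact hS.compl
      · have : f ⁻¹' B = ∅ := by
          ext y; simp only [mem_preimage, mem_empty_iff_false, iff_false, hfdef, indicator]
          split_ifs <;> assumption
        rw [this]; exact nullMeasurableSet_empty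
    obtain ⟨T, hT, hXT⟩ := h f hfmeas {c} (measurableSet_singleton c)
    refine ⟨T, hT, ?_⟩
    rw [← hXT]
    ext x
    simp only [mem_inter_iff, mem_preimage, Function.comp_apply, mem_singleton_iff]
    refine and_congr_right fun hx => ?_
    have hgx := hg hx
    have hAS : g x ∈ A ↔ g x ∈ S := by
      have := Set.ext_iff.mp hXS (g x)
      simpa [hgx] using this
    rw [hAS, ← hfS (g x)]
end

section
/- Let X₁ ⊆ ℝ^{d₁}, X₂ ⊆ ℝ^{d₂} be open sets, m ∈ ℕ*, and g: X₁ → X₂. The following are equivalent: (i) for every f ∈ L^∞(X₂, ℝ^m), f ∘ g defines an element of L^∞(X₁, ℝ^m); (ii) g is Lebesgue-Lebesgue measurable and the pushforward g_#𝓛 of the Lebesgue measure is absolutely continuous with respect to the Lebesgue measure. -/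
open MeasureTheory Set Filter
open scoped ENNReal

/-- Let `X₁ ⊆ ℝ^{d₁}` and `X₂ ⊆ ℝ^{d₂}` be open, `m ≥ 1`, and `g : X₁ → X₂`. The following
are equivalent:
(i) for every `f ∈ L^∞(X₂, ℝ^m)`, `f ∘ g` defines an element of `L^∞(X₁, ℝ^m)` (in particular
composition with `g` respects a.e. equivalence classes);
(ii) `g` is (𝔏, 𝔏)-measurable and the pushforward `g_#𝓛` of the Lebesgue measure on `X₁` by `g`
is absolutely continuous with respect to the Lebesgue measure. -/
theorem stmt_5 {d₁ d₂ m : ℕ} (hm : 0 < m)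
    (X₁ : Set (Fin d₁ → ℝ)) (X₂ : Set (Fin d₂ → ℝ)) (hX₁ : IsOpen X₁) (hX₂ : IsOpen X₂)
    (g : (Fin d₁ → ℝ) → (Fin d₂ → ℝ)) (hg : Set.MapsTo g X₁ X₂) :
    ((∀ f : (Fin d₂ → ℝ) → (Fin m → ℝ), MemLp f ⊤ (volume.restrict X₂) →
        MemLp (f ∘ g) ⊤ (volume.restrict X₁)) ∧
     (∀ f f' : (Fin d₂ → ℝ) → (Fin m → ℝ), f =ᵐ[volume.restrict X₂] f' →
        f ∘ g =ᵐ[volume.restrict X₁] f' ∘ g)) ↔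
    ((∀ A : Set (Fin d₂ → ℝ), A ⊆ X₂ → NullMeasurableSet A volume →
        NullMeasurableSet (X₁ ∩ g ⁻¹' A) volume) ∧
     (∀ A : Set (Fin d₂ → ℝ), A ⊆ X₂ → volume A = 0 → volume (X₁ ∩ g ⁻¹' A) = 0)) := by
  classical
  have hX₁m : MeasurableSet X₁ := hX₁.measurableSet
  have hX₂m : MeasurableSet X₂ := hX₂.measurableSet
  set c : Fin m → ℝ := fun _ => 1 with hc
  have hc0 : c ≠ 0 := by
    intro h
    have := congrFun h ⟨0, hm⟩
    simp [hc] at this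
  constructor
  · rintro ⟨hmem, hcong⟩
    constructor
    · -- measurability
      intro A hAX₂ hA
      have hf : MemLp (A.indicator (fun _ => c)) ⊤ (volume.restrict X₂) := by
        obtain ⟨B, hBsub, hBm, hAB⟩ := hA.exists_measurable_subset_ae_eq
        have hN : volume (symmDiff A B) = 0 := by
          rw [symmDiff_comm]
          exact measure_symmDiff_eq_zero_iff.2 hAB
        refine memLp_top_of_bound ?_ ‖c‖ ?_
        · refine AEStronglyMeasurable.congr
            (f := B.indicator (fun _ => c)) ?_ ?_
          · exact ((stronglyMeasurable_const.indicator hBm)).aestronglyMeasurable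
          · refine ae_restrict_of_ae (measure_mono_null ?_ hN)
            intro x hx
            simp only [mem_setOf_eq] at hx
            by_contra hxs
            by_cases h : x ∈ A
            · have hB : x ∈ B := by
                by_contra hB
                exact hxs (Or.inl ⟨h, hB⟩)
              refine hx ?_
              simp only [mem_setOf_eq, Set.indicator_of_mem h, Set.indicator_of_mem hB]
            · have hB : x ∉ B := fun hB => h (hBsub hB)
              refine hx ?_
              simp only [mem_setOf_eq, Set.indicator_of_notMem h, Set.indicator_of_notMem hB]
        · exact Eventually.of_forall fun x => norm_indicator_le_norm_self _ _
      have := hmem _ hf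
      obtain ⟨φ, hφm, hφeq⟩ := this.1
      have hbad : volume ({x | ¬ (A.indicator (fun _ => c) ∘ g) x = φ x} ∩ X₁) = 0 := by
        rw [← Measure.restrict_apply' hX₁m]
        exact ae_iff.mp hφeq
      refine ⟨X₁ ∩ φ ⁻¹' {c}, hX₁m.inter (hφm.measurable (measurableSet_singleton c)), ?_⟩
      rw [← measure_symmDiff_eq_zero_iff]
      refine measure_mono_null ?_ hbad
      intro x hx
      rw [Set.mem_symmDiff] at hx
      rcases hx with ⟨⟨hx1, hx2⟩, hx3⟩ | ⟨⟨hx1, hx3⟩, hx2⟩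
      · refine ⟨?_, hx1⟩
        intro heq
        apply hx3
        refine ⟨hx1, ?_⟩
        have hcval : (A.indicator (fun _ => c) ∘ g) x = c := by
          simp only [Function.comp_apply, Set.indicator_of_mem (show g x ∈ A from hx2)]
        rw [heq] at hcval
        exact hcval
      · refine ⟨?_, hx1⟩
        intro heq
        apply hx2
        refine ⟨hx1, ?_⟩
        have hφc : φ x = c := hx3
        by_contra hgA
        have h0 : (A.indicator (fun _ => c) ∘ g) x = 0 := by
          simp only [Function.comp_apply, Set.indicator_of_notMem (show g x ∉ A from hgA)]
        rw [heq, hφc] at h0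
        exact hc0 h0
    · -- null sets
      intro A hAX₂ hA0
      have heq : (0 : (Fin d₂ → ℝ) → Fin m → ℝ) =ᵐ[volume.restrict X₂]
          A.indicator (fun _ => c) := by
        refine ae_restrict_of_ae (measure_mono_null ?_ hA0)
        intro x hx
        simp only [mem_setOf_eq] at hx
        by_contra hxA
        exact hx (by simp [Set.indicator_of_notMem hxA])
      have h2 := hcong _ _ heq
      have : {x | x ∈ X₁ ∩ g ⁻¹' A} ⊆ {x | ¬ ((0 : (Fin d₂ → ℝ) → Fin m → ℝ) ∘ g) x
          = (A.indicator (fun _ => c) ∘ g) x} ∩ X₁ := by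
        rintro x ⟨hx1, hx2⟩
        refine ⟨?_, hx1⟩
        intro h
        have h' : (0 : Fin m → ℝ) = A.indicator (fun _ => c) (g x) := h
        rw [Set.indicator_of_mem (show g x ∈ A from hx2)] at h'
        exact hc0 h'.symm
      refine measure_mono_null this ?_
      rw [← Measure.restrict_apply' hX₁m]
      exact ae_iff.mp h2
  · rintro ⟨hmeas, hnull⟩
    -- congruence helper
    have hcg : ∀ h h' : (Fin d₂ → ℝ) → (Fin m → ℝ), h =ᵐ[volume.restrict X₂] h' →
        h ∘ g =ᵐ[volume.restrict X₁] h' ∘ g := by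
      intro h h' hh
      have hN : volume ({x | h x ≠ h' x} ∩ X₂) = 0 := by
        rw [← Measure.restrict_apply' hX₂m]
        exact measure_mono_null (fun x hx => hx) (ae_iff.mp hh)
      have h0 := hnull _ inter_subset_right hN
      rw [Filter.EventuallyEq, Filter.Eventually, mem_ae_iff, Measure.restrict_apply' hX₁m]
      refine measure_mono_null ?_ h0
      rintro x ⟨hx, hx1⟩
      exact ⟨hx1, hx, hg hx1⟩
    refine ⟨?_, hcg⟩
    intro f hf
    set f' := hf.1.mk f with hf'def
    have hf'm : StronglyMeasurable f' := hf.1.stronglyMeasurable_mk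
    have hff' : f =ᵐ[volume.restrict X₂] f' := hf.1.ae_eq_mk
    constructor
    · -- AEStronglyMeasurable (f ∘ g) μ₁
      have hnm : NullMeasurable (f' ∘ g) (volume.restrict X₁) := by
        intro B hB
        have key : NullMeasurableSet (X₁ ∩ g ⁻¹' (f' ⁻¹' B)) volume := by
          have : X₁ ∩ g ⁻¹' (f' ⁻¹' B) = X₁ ∩ g ⁻¹' (f' ⁻¹' B ∩ X₂) := by
            ext x; constructor
            · rintro ⟨h1, h2⟩; exact ⟨h1, h2, hg h1⟩
            · rintro ⟨h1, h2, _⟩; exact ⟨h1, h2⟩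
          rw [this]
          exact hmeas _ inter_subset_right
            (((hf'm.measurable hB).inter hX₂m).nullMeasurableSet)
        have key' : NullMeasurableSet (X₁ ∩ g ⁻¹' (f' ⁻¹' B)) (volume.restrict X₁) :=
          key.mono_ac (Measure.absolutelyContinuous_of_le Measure.restrict_le_self)
        have hcompl : NullMeasurableSet (X₁ᶜ ∩ g ⁻¹' (f' ⁻¹' B)) (volume.restrict X₁) := by
          refine (NullMeasurableSet.of_null ?_)
          rw [Measure.restrict_apply' hX₁m]
          exact measure_mono_null (fun x hx => absurd hx.2 hx.1.1) measure_empty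
        have : (f' ∘ g) ⁻¹' B = (X₁ ∩ g ⁻¹' (f' ⁻¹' B)) ∪ (X₁ᶜ ∩ g ⁻¹' (f' ⁻¹' B)) := by
          ext x
          by_cases hx : x ∈ X₁ <;> simp [Function.comp, hx]
        rw [this]
        exact key'.union hcompl
      have ham : AEMeasurable (f' ∘ g) (volume.restrict X₁) := hnm.aemeasurable
      exact ham.aestronglyMeasurable.congr (hcg f' f hff'.symm)
    · -- bound
      set C := eLpNormEssSup f (volume.restrict X₂) with hC
      have hC_lt : C < ⊤ := by
        have := hf.2
        rwa [eLpNorm_exponent_top] at this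
      set ftr : (Fin d₂ → ℝ) → (Fin m → ℝ) :=
        fun x => if ‖f x‖₊ ≤ C then f x else 0 with hftr
      have hfftr : f =ᵐ[volume.restrict X₂] ftr := by
        filter_upwards [ae_le_eLpNormEssSup (f := f) (μ := volume.restrict X₂)] with x hx
        have hx' : (‖f x‖₊ : ℝ≥0∞) ≤ C := by rw [← enorm_eq_nnnorm]; exact hx
        simp [hftr, hx']
      have h1 : f ∘ g =ᵐ[volume.restrict X₁] ftr ∘ g := hcg _ _ hfftr
      have h2 : ∀ x, (‖(ftr ∘ g) x‖₊ : ℝ≥0∞) ≤ C := by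
        intro x
        simp only [Function.comp_apply, hftr]
        split
        · assumption
        · simp
      calc eLpNorm (f ∘ g) ⊤ (volume.restrict X₁)
          = eLpNormEssSup (ftr ∘ g) (volume.restrict X₁) := by
            rw [eLpNorm_exponent_top]; exact eLpNormEssSup_congr_ae h1
        _ ≤ C := essSup_le_of_ae_le _ (Eventually.of_forall h2)
        _ < ⊤ := hC_lt
end

section
/- Let X₁ ⊆ ℝ^{d₁}, X₂ ⊆ ℝ^{d₂} be open sets with 𝓛(X₁) < ∞, p ∈ [1, ∞), m ∈ ℕ*, and g: X₁ → X₂. The following are equivalent: (i) for every f ∈ L^p(X₂, ℝ^m), f ∘ g ∈ L^p(X₁, ℝ^m); (ii) g is Lebesgue-Lebesgue measurable, g_#𝓛 is absolutely continuous with respect to 𝓛, and the Radon–Nikodym derivative of g_#𝓛 with respect to 𝓛 is essentially bounded. -/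
open MeasureTheory Set
open scoped ENNReal

/-- A set that is null measurable w.r.t. `μ.restrict X` gives a `μ`-null-measurable
intersection with `X`. -/
lemma aux_restrict_nms {α : Type*} [MeasurableSpace α] {μ : Measure α} {X S : Set α}
    (hX : MeasurableSet X) (h : NullMeasurableSet S (μ.restrict X)) :
    NullMeasurableSet (X ∩ S) μ := by
  obtain ⟨T, hTm, hae⟩ := h
  have h1 : μ.restrict X (S \ T) = 0 := (ae_eq_set.1 hae).1
  have h2 : μ.restrict X (T \ S) = 0 := (ae_eq_set.1 hae).2
  rw [Measure.restrict_apply' hX] at h1 h2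
  refine ⟨X ∩ T, hX.inter hTm, ae_eq_set.2 ⟨?_, ?_⟩⟩
  · refine measure_mono_null (fun x hx => ?_) h1
    exact ⟨⟨hx.1.2, fun h => hx.2 ⟨hx.1.1, h⟩⟩, hx.1.1⟩
  · refine measure_mono_null (fun x hx => ?_) h2
    exact ⟨⟨hx.1.2, fun h => hx.2 ⟨hx.1.1, h⟩⟩, hx.1.1⟩

/-- Let `X₁ ⊆ ℝ^{d₁}`, `X₂ ⊆ ℝ^{d₂}` be open with `𝓛(X₁) < ∞`, `p ∈ [1, ∞)`, `m ≥ 1`, and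
`g : X₁ → X₂`. The following are equivalent:
(i) for every `f ∈ L^p(X₂, ℝ^m)`, `f ∘ g ∈ L^p(X₁, ℝ^m)` (composition with `g` respecting
a.e. equivalence classes);
(ii) `g` is (𝔏, 𝔏)-measurable, the pushforward `g_#𝓛` is absolutely continuous with respect to
the Lebesgue measure `𝓛`, and the Radon–Nikodym derivative of `g_#𝓛` with respect to `𝓛` is
(essentially) bounded, i.e. there is a finite constant `C` with `g_#𝓛(A) ≤ C·𝓛(A)` for every
measurable `A`. -/
theorem stmt_6 {d₁ d₂ m : ℕ} (hm : 0 < m) (p : ℝ≥0∞) (hp : 1 ≤ p) (hp' : p ≠ ⊤)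
    (X₁ : Set (Fin d₁ → ℝ)) (X₂ : Set (Fin d₂ → ℝ)) (hX₁ : IsOpen X₁) (hX₂ : IsOpen X₂)
    (hfin : volume X₁ < ⊤)
    (g : (Fin d₁ → ℝ) → (Fin d₂ → ℝ)) (hg : Set.MapsTo g X₁ X₂) :
    ((∀ f : (Fin d₂ → ℝ) → (Fin m → ℝ), MemLp f p (volume.restrict X₂) →
        MemLp (f ∘ g) p (volume.restrict X₁)) ∧
     (∀ f f' : (Fin d₂ → ℝ) → (Fin m → ℝ), f =ᵐ[volume.restrict X₂] f' →
        f ∘ g =ᵐ[volume.restrict X₁] f' ∘ g)) ↔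
    ((∀ A : Set (Fin d₂ → ℝ), A ⊆ X₂ → NullMeasurableSet A volume →
        NullMeasurableSet (X₁ ∩ g ⁻¹' A) volume) ∧
     (∀ A : Set (Fin d₂ → ℝ), A ⊆ X₂ → volume A = 0 → volume (X₁ ∩ g ⁻¹' A) = 0) ∧
     (∃ C : ℝ≥0∞, C < ⊤ ∧ ∀ A : Set (Fin d₂ → ℝ), A ⊆ X₂ → MeasurableSet A →
        volume (X₁ ∩ g ⁻¹' A) ≤ C * volume A)) := by
  have hm1 : MeasurableSet X₁ := hX₁.measurableSet
  have hm2 : MeasurableSet X₂ := hX₂.measurableSet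
  have hp0 : p ≠ 0 := by intro h; rw [h] at hp; exact (by norm_num : ¬ ((1:ℝ≥0∞) ≤ 0)) hp
  have hpt : 0 < p.toReal := ENNReal.toReal_pos hp0 hp'
  have hNE : Nonempty (Fin m) := ⟨⟨0, hm⟩⟩
  set v : Fin m → ℝ := fun _ => (1:ℝ) with hv
  have hv0 : v ≠ 0 := by
    intro h
    have := congrFun h ⟨0, hm⟩
    simp [hv] at this
  constructor
  · rintro ⟨H1, H2⟩
    -- Step A : null sets have null preimage
    have stepA : ∀ A : Set (Fin d₂ → ℝ), volume A = 0 → volume (X₁ ∩ g ⁻¹' A) = 0 := by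
      intro A hA
      set B := toMeasurable volume A with hB
      have hAB : A ⊆ B := subset_toMeasurable _ _
      have hB0 : volume B = 0 := by rw [hB, measure_toMeasurable]; exact hA
      set f : (Fin d₂ → ℝ) → (Fin m → ℝ) := B.indicator (fun _ => v) with hf
      have hfe : f =ᵐ[volume.restrict X₂] 0 := by
        rw [Filter.eventuallyEq_iff_exists_mem]
        refine ⟨Bᶜ, ?_, fun x hx => by simp [hf, indicator_of_notMem hx]⟩
        rw [mem_ae_iff, compl_compl, Measure.restrict_apply' hm2]
        exact measure_mono_null inter_subset_left hB0
      have hcomp := H2 f 0 hfe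
      have h0 : volume.restrict X₁ (g ⁻¹' B) = 0 := by
        rw [Filter.EventuallyEq, ae_iff] at hcomp
        refine measure_mono_null ?_ hcomp
        intro x hx
        simp only [Function.comp_apply, Pi.zero_apply, mem_setOf_eq]
        rw [hf, indicator_of_mem (mem_preimage.1 hx)]
        exact hv0
      rw [Measure.restrict_apply' hm1] at h0
      refine measure_mono_null (fun x hx => ?_) h0
      exact ⟨preimage_mono hAB hx.2, hx.1⟩
    -- Step B : preimages of measurable subsets of X₂ are null measurable
    have stepB : ∀ E : Set (Fin d₂ → ℝ), E ⊆ X₂ → MeasurableSet E →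
        NullMeasurableSet (X₁ ∩ g ⁻¹' E) volume := by
      intro E hE2 hEm
      have hdecomp : X₁ ∩ g ⁻¹' E = ⋃ n : ℕ, X₁ ∩ g ⁻¹' (E ∩ Metric.ball 0 n) := by
        rw [← inter_iUnion, ← preimage_iUnion, ← inter_iUnion, Metric.iUnion_ball_nat,
          inter_univ]
      rw [hdecomp]
      refine NullMeasurableSet.iUnion fun n => ?_
      set En : Set (Fin d₂ → ℝ) := E ∩ Metric.ball 0 n with hEn
      have hEnm : MeasurableSet En := hEm.inter Metric.isOpen_ball.measurableSet
      set f : (Fin d₂ → ℝ) → (Fin m → ℝ) := En.indicator (fun _ => v) with hf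
      have hfmem : MemLp f p (volume.restrict X₂) := by
        refine memLp_indicator_const p hEnm v (Or.inr ?_)
        refine ne_of_lt (lt_of_le_of_lt ?_
          (measure_ball_lt_top (μ := volume) (x := (0 : Fin d₂ → ℝ)) (r := n)))
        rw [Measure.restrict_apply' hm2]
        exact measure_mono (inter_subset_left.trans inter_subset_right)
      obtain ⟨h, hhm, hae⟩ := (H1 f hfmem).aestronglyMeasurable
      have hpre : g ⁻¹' En = {x | (f ∘ g) x = v} := by
        ext x
        simp only [mem_preimage, Function.comp_apply, mem_setOf_eq, hf]
        constructor
        · intro hx; rw [indicator_of_mem hx]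
        · intro hx
          by_contra hc
          rw [indicator_of_notMem hc] at hx
          exact hv0 hx.symm
      have haeset : {x | (f ∘ g) x = v} =ᵐ[volume.restrict X₁] {x | h x = v} :=
        hae.mono fun x hx => by
          show ((f ∘ g) x = v) = (h x = v)
          rw [hx]
      have hnms : NullMeasurableSet (g ⁻¹' En) (volume.restrict X₁) := by
        rw [hpre]
        exact ⟨{x | h x = v}, hhm.measurable (measurableSet_singleton v), haeset⟩
      exact aux_restrict_nms hm1 hnms
    refine ⟨?_, fun A h2 h0 => stepA A h0, ?_⟩
    · -- null measurable preimages
      intro A hA2 hAnm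
      obtain ⟨E, hEA, hEm, hEae⟩ := hAnm.exists_measurable_subset_ae_eq
      have hdiff : volume (A \ E) = 0 := (ae_eq_set.1 hEae).2
      have hsplit : X₁ ∩ g ⁻¹' A = (X₁ ∩ g ⁻¹' E) ∪ (X₁ ∩ g ⁻¹' (A \ E)) := by
        ext x
        constructor
        · rintro ⟨hx1, hxA⟩
          by_cases hxE : g x ∈ E
          · exact Or.inl ⟨hx1, hxE⟩
          · exact Or.inr ⟨hx1, hxA, hxE⟩
        · rintro (⟨hx1, hxE⟩ | ⟨hx1, hxA, _⟩)
          · exact ⟨hx1, hEA hxE⟩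
          · exact ⟨hx1, hxA⟩
      rw [hsplit]
      exact (stepB E (hEA.trans hA2) hEm).union_null (stepA _ hdiff)
    · -- Step C : the uniform bound, by contradiction
      by_contra hcon
      push_neg at hcon
      choose A hA₂ hAm hAb using fun n : ℕ =>
        hcon ((4:ℝ≥0∞) ^ n) (ENNReal.pow_lt_top (by norm_num))
      have hAne : ∀ n, volume (A n) ≠ ⊤ := by
        intro n htop
        have h := hAb n
        rw [htop, ENNReal.mul_top (by positivity)] at h
        exact not_top_lt h
      have hA0 : ∀ n, volume (A n) ≠ 0 := by
        intro n h0
        have h1 := stepA (A n) h0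
        have h := hAb n
        rw [h0, mul_zero, h1] at h
        exact lt_irrefl 0 h
      set w : ℕ → ℝ≥0∞ := fun n => (2⁻¹ : ℝ≥0∞) ^ n / volume (A n) with hw
      have hwA : ∀ n, w n * volume (A n) = (2⁻¹ : ℝ≥0∞) ^ n := fun n =>
        ENNReal.div_mul_cancel (hA0 n) (hAne n)
      set φ : (Fin d₂ → ℝ) → ℝ≥0∞ := fun y => ∑' n, (A n).indicator (fun _ => w n) y with hφ
      have hφm : Measurable φ :=
        Measurable.ennreal_tsum fun n => measurable_const.indicator (hAm n)
      have hφint : ∫⁻ y, φ y ∂volume = 2 := by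
        rw [hφ]
        rw [lintegral_tsum fun n => (measurable_const.indicator (hAm n)).aemeasurable]
        have heach : ∀ n : ℕ, ∫⁻ y, (A n).indicator (fun _ => w n) y ∂volume
            = (2⁻¹ : ℝ≥0∞) ^ n := by
          intro n
          rw [lintegral_indicator (hAm n), setLIntegral_const, hwA]
        rw [tsum_congr heach, ENNReal.tsum_geometric, ENNReal.one_sub_inv_two, inv_inv]
      -- the Lp function
      set F : (Fin d₂ → ℝ) → (Fin m → ℝ) :=
        fun y => ((φ y).toReal ^ (1 / p.toReal)) • v with hF
      have hnorm : ∀ y, ‖F y‖ = (φ y).toReal ^ (1 / p.toReal) := by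
        intro y
        rw [hF]
        simp only [norm_smul, Real.norm_eq_abs]
        rw [abs_of_nonneg (Real.rpow_nonneg ENNReal.toReal_nonneg _)]
        rw [hv, pi_norm_const, norm_one, mul_one]
      have hkey : ∀ y, φ y ≠ ⊤ → ((‖F y‖₊ : ℝ≥0∞)) ^ p.toReal = φ y := by
        intro y hy
        rw [← enorm_eq_nnnorm, ← ofReal_norm, hnorm y,
          ENNReal.ofReal_rpow_of_nonneg (Real.rpow_nonneg ENNReal.toReal_nonneg _) hpt.le,
          ← Real.rpow_mul ENNReal.toReal_nonneg, one_div_mul_cancel hpt.ne',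
          Real.rpow_one, ENNReal.ofReal_toReal hy]
      have hle : ∀ y, ((‖F y‖₊ : ℝ≥0∞)) ^ p.toReal ≤ φ y := by
        intro y
        by_cases hy : φ y = ⊤
        · rw [hy]; exact le_top
        · exact (hkey y hy).le
      have hFm : Measurable F :=
        ((Real.continuous_rpow_const (by positivity)).measurable.comp
          hφm.ennreal_toReal).smul measurable_const
      have hFmem : MemLp F p (volume.restrict X₂) := by
        refine ⟨hFm.aestronglyMeasurable, ?_⟩
        rw [eLpNorm_lt_top_iff_lintegral_rpow_enorm_lt_top hp0 hp']
        calc ∫⁻ y, (‖F y‖₊ : ℝ≥0∞) ^ p.toReal ∂(volume.restrict X₂)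
            ≤ ∫⁻ y, φ y ∂(volume.restrict X₂) := lintegral_mono hle
          _ ≤ ∫⁻ y, φ y ∂volume := lintegral_mono' Measure.restrict_le_self le_rfl
          _ = 2 := hφint
          _ < ⊤ := by norm_num
      set I := ∫⁻ x, (‖(F ∘ g) x‖₊ : ℝ≥0∞) ^ p.toReal ∂(volume.restrict X₁) with hI
      have hIlt : I < ⊤ :=
        (eLpNorm_lt_top_iff_lintegral_rpow_enorm_lt_top hp0 hp').1 (H1 F hFmem).2
      set N := {y | φ y = ⊤} with hN
      have hN0 : volume N = 0 := by
        have hfae := ae_lt_top hφm (by rw [hφint]; norm_num)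
        rw [ae_iff] at hfae
        refine measure_mono_null ?_ hfae
        intro y hy
        simp only [hN, mem_setOf_eq] at hy
        simp [hy]
      have hpre0 : volume (X₁ ∩ g ⁻¹' (N ∩ X₂)) = 0 :=
        stepA _ (measure_mono_null inter_subset_left hN0)
      have hlow : ∀ n : ℕ, (2:ℝ≥0∞) ^ n ≤ I := by
        intro n
        set S := (X₁ ∩ g ⁻¹' A n) \ (X₁ ∩ g ⁻¹' (N ∩ X₂)) with hS
        have hSsub : S ⊆ {x | w n ≤ (‖(F ∘ g) x‖₊ : ℝ≥0∞) ^ p.toReal} := by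
          intro x hx
          obtain ⟨⟨hx1, hxA⟩, hx2⟩ := hx
          have hgx2 : g x ∈ X₂ := hg hx1
          have hgxN : φ (g x) ≠ ⊤ := fun hc => hx2 ⟨hx1, hc, hgx2⟩
          have hwle : w n ≤ φ (g x) := by
            have ht : (A n).indicator (fun _ => w n) (g x) ≤ φ (g x) :=
              ENNReal.le_tsum n
            rwa [indicator_of_mem (mem_preimage.1 hxA)] at ht
          simpa only [mem_setOf_eq, Function.comp_apply, hkey (g x) hgxN] using hwle
        have hmeasS : volume (X₁ ∩ g ⁻¹' A n)
            ≤ volume.restrict X₁ {x | w n ≤ (‖(F ∘ g) x‖₊ : ℝ≥0∞) ^ p.toReal} := by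
          calc volume (X₁ ∩ g ⁻¹' A n) = volume S := (measure_diff_null hpre0).symm
            _ = volume (S ∩ X₁) := by
                rw [inter_eq_self_of_subset_left (diff_subset.trans inter_subset_left)]
            _ = volume.restrict X₁ S := (Measure.restrict_apply' hm1).symm
            _ ≤ _ := measure_mono hSsub
        have haem : AEMeasurable (fun x => (‖(F ∘ g) x‖₊ : ℝ≥0∞) ^ p.toReal)
            (volume.restrict X₁) :=
          ENNReal.continuous_rpow_const.measurable.comp_aemeasurable
            (H1 F hFmem).aestronglyMeasurable.enorm
        have hmul := mul_meas_ge_le_lintegral₀ haem (w n)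
        have hfinal : w n * volume (X₁ ∩ g ⁻¹' A n) ≤ I :=
          le_trans (mul_le_mul_right hmeasS _) hmul
        refine le_trans ?_ hfinal
        have h1 : (4:ℝ≥0∞) ^ n * volume (A n) ≤ volume (X₁ ∩ g ⁻¹' A n) := (hAb n).le
        calc (2:ℝ≥0∞) ^ n = w n * ((4:ℝ≥0∞) ^ n * volume (A n)) := by
              show (2:ℝ≥0∞) ^ n
                = (2⁻¹:ℝ≥0∞) ^ n / volume (A n) * ((4:ℝ≥0∞) ^ n * volume (A n))
              rw [div_eq_mul_inv,
                show (2⁻¹:ℝ≥0∞) ^ n * (volume (A n))⁻¹ * ((4:ℝ≥0∞) ^ n * volume (A n))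
                  = ((2⁻¹:ℝ≥0∞) ^ n * 4 ^ n) * ((volume (A n))⁻¹ * volume (A n)) by ring,
                ENNReal.inv_mul_cancel (hA0 n) (hAne n), mul_one, ← mul_pow,
                show (4:ℝ≥0∞) = 2 * 2 by norm_num, ← mul_assoc,
                ENNReal.inv_mul_cancel two_ne_zero ENNReal.ofNat_ne_top, one_mul]
          _ ≤ w n * volume (X₁ ∩ g ⁻¹' A n) := mul_le_mul_right h1 _
      obtain ⟨k, hk⟩ := ENNReal.exists_nat_gt hIlt.ne
      have h2k : (k:ℝ≥0∞) ≤ (2:ℝ≥0∞) ^ k := by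
        calc (k:ℝ≥0∞) ≤ ((2^k : ℕ) : ℝ≥0∞) := by exact_mod_cast (Nat.lt_two_pow_self (n := k)).le
          _ = 2 ^ k := by push_cast; ring
      exact absurd (hlow k) (not_le.2 (lt_of_lt_of_le hk h2k))
  · rintro ⟨hmeas, hnull, C, hC, hbound⟩
    have resp : ∀ f f' : (Fin d₂ → ℝ) → (Fin m → ℝ), f =ᵐ[volume.restrict X₂] f' →
        f ∘ g =ᵐ[volume.restrict X₁] f' ∘ g := by
      intro f f' hff
      rw [Filter.EventuallyEq, ae_iff] at hff ⊢
      rw [Measure.restrict_apply' hm2] at hff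
      rw [Measure.restrict_apply' hm1]
      have hsub : {x | ¬ (f ∘ g) x = (f' ∘ g) x} ∩ X₁
          ⊆ X₁ ∩ g ⁻¹' ({y | ¬ f y = f' y} ∩ X₂) := by
        rintro x ⟨hxne, hx1⟩
        exact ⟨hx1, hxne, hg hx1⟩
      exact measure_mono_null hsub (hnull _ inter_subset_right hff)
    have hgnm : NullMeasurable g (volume.restrict X₁) := by
      intro B hBm
      have h1 : NullMeasurableSet (X₁ ∩ g ⁻¹' (B ∩ X₂)) volume :=
        hmeas (B ∩ X₂) inter_subset_right (hBm.inter hm2).nullMeasurableSet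
      obtain ⟨T, hTm, hae⟩ := h1
      have hd1 : volume ((X₁ ∩ g ⁻¹' (B ∩ X₂)) \ T) = 0 := (ae_eq_set.1 hae).1
      have hd2 : volume (T \ (X₁ ∩ g ⁻¹' (B ∩ X₂))) = 0 := (ae_eq_set.1 hae).2
      refine ⟨T ∩ X₁, hTm.inter hm1, ae_eq_set.2 ⟨?_, ?_⟩⟩
      · rw [Measure.restrict_apply' hm1]
        refine measure_mono_null ?_ hd1
        rintro x ⟨⟨hxB, hxT⟩, hx1⟩
        exact ⟨⟨hx1, hxB, hg hx1⟩, fun hT => hxT ⟨hT, hx1⟩⟩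
      · rw [Measure.restrict_apply' hm1]
        refine measure_mono_null ?_ hd2
        rintro x ⟨⟨⟨hxT, hx1⟩, hxB⟩, _⟩
        exact ⟨hxT, fun hc => hxB hc.2.1⟩
    have hgae : AEMeasurable g (volume.restrict X₁) := hgnm.aemeasurable
    refine ⟨?_, resp⟩
    intro f hf
    obtain ⟨f', hf'sm, hff'⟩ := hf.aestronglyMeasurable
    have hf'meas : Measurable f' := hf'sm.measurable
    have hcomp_ae : f ∘ g =ᵐ[volume.restrict X₁] f' ∘ g := resp f f' hff'
    have hasm : AEStronglyMeasurable (f ∘ g) (volume.restrict X₁) :=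
      ((hf'meas.comp_aemeasurable hgae).aestronglyMeasurable).congr hcomp_ae.symm
    refine ⟨hasm, ?_⟩
    rw [eLpNorm_congr_ae hcomp_ae,
      eLpNorm_lt_top_iff_lintegral_rpow_enorm_lt_top hp0 hp']
    have hintm : Measurable (fun y => (‖f' y‖₊ : ℝ≥0∞) ^ p.toReal) :=
      ENNReal.continuous_rpow_const.measurable.comp hf'meas.enorm
    have hmap : ∫⁻ x, (‖(f' ∘ g) x‖₊ : ℝ≥0∞) ^ p.toReal ∂(volume.restrict X₁)
        = ∫⁻ y, (‖f' y‖₊ : ℝ≥0∞) ^ p.toReal ∂((volume.restrict X₁).map g) :=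
      (lintegral_map' hintm.aemeasurable hgae).symm
    have hmaple : (volume.restrict X₁).map g ≤ C • volume.restrict X₂ := by
      rw [Measure.le_iff]
      intro s hs
      rw [Measure.map_apply_of_aemeasurable hgae hs, Measure.restrict_apply' hm1]
      have hset : g ⁻¹' s ∩ X₁ = X₁ ∩ g ⁻¹' (s ∩ X₂) := by
        ext x
        constructor
        · rintro ⟨hxs, hx1⟩; exact ⟨hx1, hxs, hg hx1⟩
        · rintro ⟨hx1, hxs, _⟩; exact ⟨hxs, hx1⟩
      rw [hset]
      calc volume (X₁ ∩ g ⁻¹' (s ∩ X₂)) ≤ C * volume (s ∩ X₂) :=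
            hbound _ inter_subset_right (hs.inter hm2)
        _ = (C • volume.restrict X₂) s := by
            rw [Measure.smul_apply, smul_eq_mul, Measure.restrict_apply' hm2]
    have hf'lt : ∫⁻ y, (‖f' y‖₊ : ℝ≥0∞) ^ p.toReal ∂(volume.restrict X₂) < ⊤ := by
      refine (eLpNorm_lt_top_iff_lintegral_rpow_enorm_lt_top (f := f') (μ := volume.restrict X₂) hp0 hp').1 ?_
      rw [← eLpNorm_congr_ae hff']
      exact hf.2
    calc ∫⁻ x, (‖(f' ∘ g) x‖₊ : ℝ≥0∞) ^ p.toReal ∂(volume.restrict X₁)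
        = ∫⁻ y, (‖f' y‖₊ : ℝ≥0∞) ^ p.toReal ∂((volume.restrict X₁).map g) := hmap
      _ ≤ ∫⁻ y, (‖f' y‖₊ : ℝ≥0∞) ^ p.toReal ∂(C • volume.restrict X₂) :=
          lintegral_mono' hmaple le_rfl
      _ = C * ∫⁻ y, (‖f' y‖₊ : ℝ≥0∞) ^ p.toReal ∂(volume.restrict X₂) :=
          lintegral_smul_measure _ _
      _ < ⊤ := ENNReal.mul_lt_top hC hf'lt
end

section
/- Let τ: ℝ₊ → (0, ∞) be a delay function satisfying inf_{s ∈ [0,t]} τ(s) > 0 for every t ≥ 0. Define Dₙ recursively by D₀ = ℝ, Dₙ = {t ∈ ℝ₊ : t − τ(t) ∈ Dₙ₋₁}. Then the intersection of all Dₙ over n ∈ ℕ is empty. -/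
open Set

/-- The sets `Dₙ` on which the `n`-th iterated delay function is defined:
`D₀ = ℝ`, `Dₙ = {t ∈ ℝ₊ : t − τ(t) ∈ Dₙ₋₁}`. -/
def Dset (τ : ℝ → ℝ) : ℕ → Set ℝ
  | 0 => Set.univ
  | n + 1 => {t : ℝ | 0 ≤ t ∧ t - τ t ∈ Dset τ n}

/-- The iterated delay functions: `σ₀ = id`, `σₙ(t) = σₙ₋₁(t − τ(t))`. -/
def iterDelay (τ : ℝ → ℝ) : ℕ → ℝ → ℝ
  | 0 => fun t => t
  | n + 1 => fun t => iterDelay τ n (t - τ t)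

lemma iterDelay_succ' (τ : ℝ → ℝ) (n : ℕ) (t : ℝ) :
    iterDelay τ (n + 1) t = iterDelay τ n t - τ (iterDelay τ n t) := by
  induction n generalizing t with
  | zero => rfl
  | succ n ih =>
    show iterDelay τ (n + 1) (t - τ t) = _
    rw [ih (t - τ t)]
    rfl

lemma Dset_shift (τ : ℝ → ℝ) (m k : ℕ) (t : ℝ) (h : t ∈ Dset τ (m + k)) :
    iterDelay τ k t ∈ Dset τ m := by
  induction k generalizing t with
  | zero => exact h
  | succ k ih =>
    obtain ⟨_, h2⟩ := h
    exact ih (t - τ t) h2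

/-- If the delay function `τ` satisfies `inf_{s ∈ [0, t]} τ(s) > 0` for every `t ≥ 0`,
then the intersection of all the sets `Dₙ` is empty. -/
theorem stmt_9 (τ : ℝ → ℝ) (hτ : ∀ t : ℝ, 0 ≤ t → 0 < τ t)
    (hinf : ∀ t : ℝ, 0 ≤ t → ∃ δ > (0 : ℝ), ∀ s ∈ Set.Icc (0 : ℝ) t, δ ≤ τ s) :
    ⋂ n : ℕ, Dset τ n = ∅ := by
  by_contra h
  obtain ⟨t, ht⟩ := nonempty_iff_ne_empty.2 h
  simp only [mem_iInter] at ht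
  have hmem : ∀ k : ℕ, iterDelay τ k t ∈ Dset τ 1 := fun k =>
    Dset_shift τ 1 k t (ht (1 + k))
  have ht0 : 0 ≤ t := (ht 1).1
  obtain ⟨δ, hδ, hδle⟩ := hinf t ht0
  have key : ∀ k : ℕ, iterDelay τ k t ≤ t - k * δ := by
    intro k
    induction k with
    | zero => simp [iterDelay]
    | succ k ih =>
      rw [iterDelay_succ']
      have h0 : 0 ≤ iterDelay τ k t := (hmem k).1
      have hle : iterDelay τ k t ≤ t := by
        nlinarith [Nat.cast_nonneg (α := ℝ) k]
      have hτk := hδle (iterDelay τ k t) ⟨h0, hle⟩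
      push_cast
      linarith
  obtain ⟨k, hk⟩ := exists_nat_gt (t / δ)
  have h0 : 0 ≤ iterDelay τ k t := (hmem k).1
  have := key k
  have : t / δ * δ < k * δ := by
    exact mul_lt_mul_of_pos_right hk hδ
  rw [div_mul_cancel₀ _ (ne_of_gt hδ)] at this
  linarith
end

section
/- Let A be a real d×d matrix, τ a delay function with inf_{s∈[0,t]} τ(s) > 0 for all t ≥ 0, and x: [−h(0), ∞) → ℝ^d a function satisfying x(t) = A·x(t − τ(t)) for every t ≥ 0. Then for every t ∈ ℝ₊ and every k ∈ {0, ..., n(t)}, we have x(t) = A^k · x(σ_k(t)). In particular, x(t) = A^{n(t)} · x₀(σ_{n(t)}(t)) for every t ≥ 0, where x₀ is the restriction of x to [−h(0), 0). -/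
open Set

/-- Representation formula: if `x` satisfies `x(t) = A·x(t − τ(t))` for every `t ≥ 0`, then
`x(t) = A^k·x(σ_k(t))` for every `t ≥ 0` and `k ∈ {0, …, n(t)}`; in particular
`x(t) = A^{n(t)}·x₀(σ_{n(t)}(t))` where `x₀` is the restriction of `x` to `[−h(0), 0)`. -/
theorem stmt_13 {d : ℕ} (A : Matrix (Fin d) (Fin d) ℝ) (τ : ℝ → ℝ)
    (hτ : ∀ t : ℝ, 0 ≤ t → 0 < τ t)
    (hinf : ∀ t : ℝ, 0 ≤ t → ∃ δ > (0 : ℝ), ∀ s ∈ Set.Icc (0 : ℝ) t, δ ≤ τ s)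
    (nfun : ℝ → ℕ) (hn : ∀ t : ℝ, t ∈ Dset τ (nfun t) ∧ t ∉ Dset τ (nfun t + 1))
    (x : ℝ → Fin d → ℝ) (hx : ∀ t : ℝ, 0 ≤ t → x t = A.mulVec (x (t - τ t))) :
    ∀ t : ℝ, 0 ≤ t →
      (∀ k : ℕ, k ≤ nfun t → x t = (A ^ k).mulVec (x (iterDelay τ k t))) ∧
      x t = (A ^ nfun t).mulVec (x (iterDelay τ (nfun t) t)) := by
  have hmono : ∀ n : ℕ, Dset τ (n + 1) ⊆ Dset τ n := by
    intro n
    induction n with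
    | zero => intro t _; trivial
    | succ n ih => intro t ht; exact ⟨ht.1, ih ht.2⟩
  have key : ∀ k : ℕ, ∀ t : ℝ, t ∈ Dset τ k → x t = (A ^ k).mulVec (x (iterDelay τ k t)) := by
    intro k
    induction k with
    | zero => intro t _; simp [iterDelay, Dset, Matrix.one_mulVec]
    | succ k ih =>
      intro t ht
      obtain ⟨ht0, ht1⟩ := ht
      calc x t = A.mulVec (x (t - τ t)) := hx t ht0
        _ = A.mulVec ((A ^ k).mulVec (x (iterDelay τ k (t - τ t)))) := by rw [← ih _ ht1]
        _ = (A ^ (k + 1)).mulVec (x (iterDelay τ (k + 1) t)) := by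
            rw [Matrix.mulVec_mulVec, ← pow_succ']; rfl
  intro t _
  have hsub : ∀ k : ℕ, k ≤ nfun t → t ∈ Dset τ k := by
    intro k hk
    have hanti : ∀ n : ℕ, k ≤ n → Dset τ n ⊆ Dset τ k := by
      intro n h
      induction h with
      | refl => exact subset_rfl
      | step h ih => exact (hmono _).trans ih
    exact hanti _ hk (hn t).1

  exact ⟨fun k hk => key k t (hsub k hk), key (nfun t) t (hn t).1⟩
end

section
/- Let A be a real d×d matrix, τ a delay function with inf_{s∈[0,t]} τ(s) > 0 for all t ≥ 0, and x₀: [−h(0), 0) → ℝ^d any function, where h(0) = −inf_{s≥0}(s − τ(s)). Then there exists a unique function x: [−h(0), ∞) → ℝ^d which restricts to x₀ on [−h(0), 0) and satisfies x(t) = A·x(t − τ(t)) for every t ≥ 0; it is given by x(t) = A^{n(t)}·x₀(σ_{n(t)}(t)) for t ≥ 0. -/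
open Set

/-- `t` belongs to the interval `[−h(0), 0)`, where `h(0) = −inf_{s ≥ 0}(s − τ(s))`:
`t < 0` and `t` is above every lower bound of `{s − τ(s) : s ≥ 0}` (so that when
`h(0) = +∞` this covers all negative reals). -/
def InNegDom (τ : ℝ → ℝ) (t : ℝ) : Prop :=
  t < 0 ∧ ∀ m : ℝ, (∀ s : ℝ, 0 ≤ s → m ≤ s - τ s) → m ≤ t

/-- Existence and uniqueness of solutions: for every initial condition
`x₀ : [−h(0), 0) → ℝ^d` there is a function `x : [−h(0), ∞) → ℝ^d` restricting to `x₀` on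
`[−h(0), 0)` and satisfying `x(t) = A·x(t − τ(t))` for all `t ≥ 0`; it is given by
`x(t) = A^{n(t)}·x₀(σ_{n(t)}(t))` for `t ≥ 0`, and it is unique on `[−h(0), ∞)`. -/
theorem stmt_14 {d : ℕ} (A : Matrix (Fin d) (Fin d) ℝ) (τ : ℝ → ℝ)
    (hτ : ∀ t : ℝ, 0 ≤ t → 0 < τ t)
    (hinf : ∀ t : ℝ, 0 ≤ t → ∃ δ > (0 : ℝ), ∀ s ∈ Set.Icc (0 : ℝ) t, δ ≤ τ s)
    (nfun : ℝ → ℕ) (hn : ∀ t : ℝ, t ∈ Dset τ (nfun t) ∧ t ∉ Dset τ (nfun t + 1))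
    (x₀ : ℝ → Fin d → ℝ) :
    ∃ x : ℝ → Fin d → ℝ,
      ((∀ t : ℝ, InNegDom τ t → x t = x₀ t) ∧
       (∀ t : ℝ, 0 ≤ t → x t = A.mulVec (x (t - τ t))) ∧
       (∀ t : ℝ, 0 ≤ t → x t = (A ^ nfun t).mulVec (x₀ (iterDelay τ (nfun t) t)))) ∧
      ∀ y : ℝ → Fin d → ℝ,
        ((∀ t : ℝ, InNegDom τ t → y t = x₀ t) ∧
         (∀ t : ℝ, 0 ≤ t → y t = A.mulVec (y (t - τ t)))) →
        ∀ t : ℝ, (0 ≤ t ∨ InNegDom τ t) → y t = x t := by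
  -- basic facts about Dset
  have hsub : ∀ n : ℕ, Dset τ (n + 1) ⊆ Dset τ n := by
    intro n
    induction n with
    | zero => intro t _; trivial
    | succ n ih =>
      intro t ht
      exact ⟨ht.1, ih ht.2⟩
  have hanti : ∀ m n : ℕ, m ≤ n → Dset τ n ⊆ Dset τ m := by
    intro m n h
    induction h with
    | refl => exact fun t ht => ht
    | step h ih => exact fun t ht => ih (hsub _ ht)
  have huniq : ∀ (t : ℝ) (k : ℕ), t ∈ Dset τ k → t ∉ Dset τ (k + 1) → nfun t = k := by
    intro t k hk hk1
    rcases lt_trichotomy (nfun t) k with h | h | h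
    · exact absurd (hanti _ _ h hk) (hn t).2
    · exact h
    · exact absurd (hanti _ _ h (hn t).1) hk1
  have hpos : ∀ t : ℝ, 0 ≤ t → ∃ m : ℕ, nfun t = m + 1 := by
    intro t ht
    have h1 : t ∈ Dset τ 1 := ⟨ht, trivial⟩
    cases h : nfun t with
    | zero => exact absurd (h ▸ (hn t).2) (by simp [h1])
    | succ m => exact ⟨m, rfl⟩
  -- key step lemmas
  have hstep_pos : ∀ t : ℝ, 0 ≤ t → 0 ≤ t - τ t → nfun t = nfun (t - τ t) + 1 := by
    intro t ht ht'
    obtain ⟨m, hm⟩ := hpos t ht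
    have hmem : t - τ t ∈ Dset τ m := (hm ▸ (hn t).1).2
    have hnmem : t - τ t ∉ Dset τ (m + 1) := by
      intro hc
      exact (hm ▸ (hn t).2) ⟨ht, hc⟩
    rw [huniq _ _ hmem hnmem, hm]
  have hstep_neg : ∀ t : ℝ, 0 ≤ t → t - τ t < 0 → nfun t = 1 := by
    intro t ht ht'
    obtain ⟨m, hm⟩ := hpos t ht
    have hmem : t - τ t ∈ Dset τ m := (hm ▸ (hn t).1).2
    cases m with
    | zero => simpa using hm
    | succ k => exact absurd hmem.1 (not_le.mpr ht')
  -- define x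
  set x : ℝ → Fin d → ℝ := fun t =>
    if 0 ≤ t then (A ^ nfun t).mulVec (x₀ (iterDelay τ (nfun t) t)) else x₀ t with hx
  have hneg : ∀ t : ℝ, t < 0 → x t = x₀ t := by
    intro t ht; simp [hx, not_le.mpr ht]
  have hform : ∀ t : ℝ, 0 ≤ t →
      x t = (A ^ nfun t).mulVec (x₀ (iterDelay τ (nfun t) t)) := by
    intro t ht; simp [hx, ht]
  have hrec : ∀ t : ℝ, 0 ≤ t → x t = A.mulVec (x (t - τ t)) := by
    intro t ht
    rcases le_or_gt 0 (t - τ t) with ht' | ht'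
    · rw [hform t ht, hform _ ht', hstep_pos t ht ht']
      obtain ⟨m, hm⟩ := hpos _ ht'
      rw [pow_succ', Matrix.mulVec_mulVec]
      rfl
    · rw [hform t ht, hstep_neg t ht ht', hneg _ ht', pow_one]
      rfl
  refine ⟨x, ⟨fun t ht => hneg t ht.1, hrec, hform⟩, ?_⟩
  rintro y ⟨hy0, hyr⟩ t ht
  -- uniqueness by strong induction on nfun t
  have main : ∀ n : ℕ, ∀ t : ℝ, 0 ≤ t → nfun t = n → y t = x t := by
    intro n
    induction n using Nat.strong_induction_on with
    | _ n ih =>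
      intro t ht hnt
      rcases le_or_gt 0 (t - τ t) with ht' | ht'
      · have hlt : nfun (t - τ t) < n := by
          have := hstep_pos t ht ht'
          omega
        rw [hyr t ht, hrec t ht, ih _ hlt _ ht' rfl]
      · have hind : InNegDom τ (t - τ t) :=
          ⟨ht', fun m hm => hm t ht⟩
        rw [hyr t ht, hrec t ht, hy0 _ hind, hneg _ ht']
  rcases ht with ht | ht
  · exact main _ t ht rfl
  · rw [hy0 t ht, hneg t ht.1]
end

section
/- Let A be a nonzero real d×d matrix and τ a delay function, σ₁(t) = t − τ(t). Suppose there exists a function x: [−h(0), ∞) → ℝ^d such that for every x̃ equal to x almost everywhere, x̃(t) = A·x̃(t − τ(t)) for almost every t ≥ 0. Then σ₁ maps Lebesgue-null sets to sets with Lebesgue-null preimage: 𝓛(σ₁⁻¹(N)) = 0 for every Lebesgue measurable N with 𝓛(N) = 0. -/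
open MeasureTheory Set

/-- If `A ≠ 0` and there exists an almost-everywhere solution `x` of the difference equation
`x(t) = A·x(t − τ(t))` (i.e. every `x̃` equal to `x` a.e. satisfies the equation for a.e.
`t ≥ 0`), then `σ₁(t) = t − τ(t)` has null preimages of null sets:
`𝓛(σ₁⁻¹(N)) = 0` for every Lebesgue-null set `N`. -/
theorem stmt_15 {d : ℕ} (A : Matrix (Fin d) (Fin d) ℝ) (hA : A ≠ 0)
    (τ : ℝ → ℝ) (hτ : ∀ t : ℝ, 0 ≤ t → 0 < τ t)
    (x : ℝ → Fin d → ℝ)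
    (hx : ∀ x' : ℝ → Fin d → ℝ, (∀ᵐ t ∂(volume : Measure ℝ), x' t = x t) →
      ∀ᵐ t ∂((volume : Measure ℝ).restrict (Set.Ici (0 : ℝ))),
        x' t = A.mulVec (x' (t - τ t))) :
    ∀ N : Set ℝ, volume N = 0 → volume {t : ℝ | 0 ≤ t ∧ t - τ t ∈ N} = 0 := by
  intro N hN
  obtain ⟨i0, j0, hij⟩ : ∃ i j, A i j ≠ 0 := by
    by_contra h
    push_neg at h
    exact hA (by ext i j; simpa using h i j)
  set v : Fin d → ℝ := Pi.single j0 1 with hv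
  set x' : ℝ → Fin d → ℝ := fun t => x t + N.indicator (fun _ => v) t with hx'def
  have hnotN : ∀ᵐ t ∂(volume : Measure ℝ), t ∉ N := by
    rw [ae_iff]; simpa using hN
  have hxx' : ∀ᵐ t ∂(volume : Measure ℝ), x' t = x t := by
    filter_upwards [hnotN] with t ht
    simp [hx'def, Set.indicator_of_notMem ht]
  have h1 := hx x' hxx'
  have h2 := hx x (Filter.Eventually.of_forall fun t => rfl)
  have key : ∀ᵐ t ∂((volume : Measure ℝ).restrict (Set.Ici (0 : ℝ))),
      t - τ t ∉ N := by
    filter_upwards [h1, h2, ae_restrict_of_ae hxx'] with t ht1 ht2 ht3 htN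
    have heq : A.mulVec (x' (t - τ t)) = A.mulVec (x (t - τ t)) := by
      rw [← ht1, ← ht2, ht3]
    have hx'v : x' (t - τ t) = x (t - τ t) + v := by
      simp [hx'def, Set.indicator_of_mem htN]
    rw [hx'v, Matrix.mulVec_add] at heq
    have hAv : A.mulVec v = 0 := by
      have := add_eq_left.mp heq
      exact this
    have := congrFun hAv i0
    simp [hv, Matrix.mulVec, dotProduct, Pi.single_apply,
      Finset.sum_ite_eq, mul_comm] at this
    exact hij this
  have h0 : (volume : Measure ℝ).restrict (Set.Ici (0 : ℝ)) {t | t - τ t ∈ N} = 0 := by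
    rw [ae_iff] at key
    simpa using key
  have hsub : {t : ℝ | 0 ≤ t ∧ t - τ t ∈ N} ⊆ {t : ℝ | t - τ t ∈ N} ∩ Set.Ici 0 :=
    fun t ht => ⟨ht.2, ht.1⟩
  refine measure_mono_null hsub ?_
  rw [← Measure.restrict_apply' measurableSet_Ici]
  exact h0
end

section
/- Let A be a real d×d matrix with spectral radius ρ(A) < 1, and τ a delay function satisfying inf_{s∈[0,t]} τ(s) > 0 for all t ≥ 0 and lim_{t→∞}(t − τ(t)) = +∞. Then every solution x: [−h(0), ∞) → ℝ^d of x(t) = A·x(t − τ(t)) (t ≥ 0) with bounded initial condition x₀: [−h(0), 0) → ℝ^d satisfies x(t) → 0 as t → +∞. -/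
open Set Filter Topology

attribute [local instance] Matrix.linftyOpNormedRing Matrix.linftyOpNormedAlgebra

-- test instances
example : CompleteSpace (Matrix (Fin 3) (Fin 3) ℂ) := by infer_instance

lemma aux_norm_map {d : ℕ} (B : Matrix (Fin d) (Fin d) ℝ) :
    ‖B.map (fun r : ℝ => (r : ℂ))‖ = ‖B‖ := by
  rw [Matrix.linfty_opNorm_def, Matrix.linfty_opNorm_def]
  congr 1
  apply Finset.sup_congr rfl
  intro i _
  congr 1
  ext j
  simp [Matrix.map_apply]

lemma aux_pow_tendsto {d : ℕ} (A : Matrix (Fin d) (Fin d) ℝ)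
    (hA : spectralRadius ℂ (A.map fun r : ℝ => (r : ℂ)) < 1) :
    Tendsto (fun m : ℕ => ‖A ^ m‖) atTop (𝓝 0) := by
  set a : Matrix (Fin d) (Fin d) ℂ := A.map (fun r : ℝ => (r : ℂ)) with ha
  obtain ⟨r, hρr, hr1⟩ := ENNReal.lt_iff_exists_nnreal_btwn.mp hA
  have hr1' : (r : ℝ) < 1 := by exact_mod_cast hr1
  have hgel := spectrum.pow_nnnorm_pow_one_div_tendsto_nhds_spectralRadius a
  have hev : ∀ᶠ n : ℕ in atTop, (‖a ^ n‖₊ : ENNReal) ^ (1 / (n : ℝ)) < (r : ENNReal) :=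
    hgel.eventually_lt_const hρr
  have hbound : ∀ᶠ n : ℕ in atTop, ‖A ^ n‖ ≤ (r : ℝ) ^ n := by
    filter_upwards [hev, eventually_ge_atTop 1] with n hn hn1
    have hnpos : (0 : ℝ) < (n : ℝ) := by positivity
    have h2 : ((‖a ^ n‖₊ : ENNReal) ^ (1 / (n : ℝ))) ^ (n : ℝ) < (r : ENNReal) ^ (n : ℝ) :=
      ENNReal.rpow_lt_rpow hn hnpos
    rw [← ENNReal.rpow_mul, one_div, inv_mul_cancel₀ (ne_of_gt hnpos), ENNReal.rpow_one,
      ENNReal.rpow_natCast] at h2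
    have h3 : (‖a ^ n‖₊ : ENNReal) < ((r ^ n : NNReal) : ENNReal) := by
      rwa [ENNReal.coe_pow]
    have h4 : ‖a ^ n‖₊ < r ^ n := by exact_mod_cast h3
    have h5 : ‖a ^ n‖ = ‖A ^ n‖ := by
      have : a ^ n = (A ^ n).map (fun x : ℝ => (x : ℂ)) := by
        rw [ha]
        exact ((map_pow (Complex.ofRealHom.mapMatrix :
          Matrix (Fin d) (Fin d) ℝ →+* Matrix (Fin d) (Fin d) ℂ) A n)).symm
      rw [this, aux_norm_map]
    rw [← h5]
    calc ‖a ^ n‖ ≤ ((r ^ n : NNReal) : ℝ) := le_of_lt (by exact_mod_cast h4)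
    _ = (r : ℝ) ^ n := by push_cast; ring
  have hpow : Tendsto (fun n : ℕ => (r : ℝ) ^ n) atTop (𝓝 0) :=
    tendsto_pow_atTop_nhds_zero_of_lt_one r.coe_nonneg hr1'
  exact squeeze_zero' (Eventually.of_forall fun n => norm_nonneg _) hbound hpow

lemma aux_reach {d : ℕ} (A : Matrix (Fin d) (Fin d) ℝ)
    (τ : ℝ → ℝ) (hτ : ∀ t : ℝ, 0 ≤ t → 0 < τ t)
    (hinf : ∀ t : ℝ, 0 ≤ t → ∃ δ > (0 : ℝ), ∀ s ∈ Set.Icc (0 : ℝ) t, δ ≤ τ s)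
    (x : ℝ → Fin d → ℝ) (hx : ∀ t : ℝ, 0 ≤ t → x t = A.mulVec (x (t - τ t))) :
    ∀ t : ℝ, 0 ≤ t → ∃ m : ℕ, ∃ s : ℝ, InNegDom τ s ∧ x t = (A ^ m).mulVec (x s) := by
  intro t ht
  obtain ⟨δ, hδ, hδle⟩ := hinf t ht
  -- strong claim by induction on k
  have key : ∀ k : ℕ, ∀ u : ℝ, 0 ≤ u → u ≤ t → u ≤ k * δ →
      ∃ m : ℕ, ∃ s : ℝ, InNegDom τ s ∧ x u = (A ^ m).mulVec (x s) := by
    intro k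
    induction k with
    | zero =>
      intro u hu0 hut huk
      have hu : u = 0 := le_antisymm (by simpa using huk) hu0
      subst hu
      have hτ0 : 0 < τ 0 := hτ 0 le_rfl
      refine ⟨1, 0 - τ 0, ⟨by linarith, fun m hm => hm 0 le_rfl⟩, ?_⟩
      rw [pow_one]
      exact hx 0 le_rfl
    | succ k ih =>
      intro u hu0 hut huk
      set v := u - τ u with hv
      by_cases hvneg : v < 0
      · refine ⟨1, v, ⟨hvneg, fun m hm => hm u hu0⟩, ?_⟩
        rw [pow_one]
        exact hx u hu0
      · push_neg at hvneg
        have hδu : δ ≤ τ u := hδle u ⟨hu0, hut⟩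
        have hvlt : v ≤ u - δ := by simp [hv]; linarith
        obtain ⟨m, s, hs, heq⟩ := ih v hvneg (by linarith) (by push_cast at huk ⊢; linarith)
        refine ⟨m + 1, s, hs, ?_⟩
        rw [hx u hu0, heq, Matrix.mulVec_mulVec, ← pow_succ']
  obtain ⟨k, hk⟩ := exists_nat_ge (t / δ)
  exact key k t ht le_rfl (by rw [div_le_iff₀ hδ] at hk; linarith)

lemma aux_depth {d : ℕ} (A : Matrix (Fin d) (Fin d) ℝ)
    (τ : ℝ → ℝ) (hτ : ∀ t : ℝ, 0 ≤ t → 0 < τ t)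
    (hinf : ∀ t : ℝ, 0 ≤ t → ∃ δ > (0 : ℝ), ∀ s ∈ Set.Icc (0 : ℝ) t, δ ≤ τ s)
    (hlim : Tendsto (fun t : ℝ => t - τ t) atTop atTop)
    (x : ℝ → Fin d → ℝ) (hx : ∀ t : ℝ, 0 ≤ t → x t = A.mulVec (x (t - τ t))) :
    ∀ n : ℕ, ∀ᶠ t : ℝ in atTop, ∃ m : ℕ, n ≤ m ∧
      ∃ s : ℝ, InNegDom τ s ∧ x t = (A ^ m).mulVec (x s) := by
  intro n
  induction n with
  | zero =>
    filter_upwards [eventually_ge_atTop (0 : ℝ)] with t ht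
    obtain ⟨m, s, hs, heq⟩ := aux_reach A τ hτ hinf x hx t ht
    exact ⟨m, Nat.zero_le _, s, hs, heq⟩
  | succ n ih =>
    obtain ⟨T, hT⟩ := (eventually_atTop).mp ih
    filter_upwards [eventually_ge_atTop (0 : ℝ), hlim.eventually (eventually_ge_atTop T)]
      with t ht0 htT
    obtain ⟨m, hmn, s, hs, heq⟩ := hT (t - τ t) htT
    refine ⟨m + 1, by omega, s, hs, ?_⟩
    rw [hx t ht0, heq, Matrix.mulVec_mulVec, ← pow_succ']

/-- If the spectral radius of `A` (as a complex matrix) is `< 1`, `τ` is a delay function with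
`inf_{s ∈ [0,t]} τ(s) > 0` for all `t ≥ 0` and `t − τ(t) → +∞`, then every solution of
`x(t) = A·x(t − τ(t))` with bounded initial condition tends to `0` at `+∞`. -/
theorem stmt_16 {d : ℕ} (A : Matrix (Fin d) (Fin d) ℝ)
    (hA : spectralRadius ℂ (A.map fun r : ℝ => (r : ℂ)) < 1)
    (τ : ℝ → ℝ) (hτ : ∀ t : ℝ, 0 ≤ t → 0 < τ t)
    (hinf : ∀ t : ℝ, 0 ≤ t → ∃ δ > (0 : ℝ), ∀ s ∈ Set.Icc (0 : ℝ) t, δ ≤ τ s)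
    (hlim : Tendsto (fun t : ℝ => t - τ t) atTop atTop)
    (x : ℝ → Fin d → ℝ) (hx : ∀ t : ℝ, 0 ≤ t → x t = A.mulVec (x (t - τ t)))
    (hbdd : ∃ M : ℝ, ∀ t : ℝ, InNegDom τ t → ‖x t‖ ≤ M) :
    Tendsto x atTop (𝓝 (0 : Fin d → ℝ)) := by
  obtain ⟨M, hM⟩ := hbdd
  have hM0 : 0 ≤ M := by
    have h0 : InNegDom τ (0 - τ 0) := ⟨by have := hτ 0 le_rfl; linarith, fun m hm => hm 0 le_rfl⟩
    exact le_trans (norm_nonneg _) (hM _ h0)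
  rw [NormedAddCommGroup.tendsto_nhds_zero]
  intro ε hε
  have hpow := aux_pow_tendsto A hA
  have hsmall : ∀ᶠ m : ℕ in atTop, ‖A ^ m‖ < ε / (M + 1) := by
    apply hpow.eventually_lt_const
    positivity
  obtain ⟨n, hn⟩ := (eventually_atTop).mp hsmall
  filter_upwards [aux_depth A τ hτ hinf hlim x hx n] with t ⟨m, hmn, s, hs, heq⟩
  have h1 : ‖x t‖ ≤ ‖A ^ m‖ * ‖x s‖ := by
    rw [heq]; exact Matrix.linfty_opNorm_mulVec _ _
  have h2 : ‖A ^ m‖ * ‖x s‖ ≤ (ε / (M + 1)) * M := by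
    apply mul_le_mul (le_of_lt (hn m hmn)) (hM s hs) (norm_nonneg _)
    positivity
  have h3 : (ε / (M + 1)) * M < ε := by
    rw [div_mul_eq_mul_div, div_lt_iff₀ (by linarith)]
    nlinarith
  linarith
end

section
/- Let A be a real d×d matrix and τ a delay function satisfying inf_{s∈[0,t]} τ(s) > 0 for all t ≥ 0. Suppose every solution of x(t) = A·x(t − τ(t)) with bounded initial condition converges to 0 as t → +∞. Then ρ(A) < 1. If moreover A is not nilpotent, then lim_{t→∞}(t − τ(t)) = +∞. -/
open Set Filter Topology

/-- Real part of a complex `mulVec` by a real matrix. -/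
lemma re_mulVec {d : ℕ} (A : Matrix (Fin d) (Fin d) ℝ) (w : Fin d → ℂ) :
    (fun i => (((A.map fun r : ℝ => (r : ℂ)).mulVec w) i).re)
      = A.mulVec (fun i => (w i).re) := by
  funext i
  simp only [Matrix.mulVec, dotProduct, Matrix.map_apply, Complex.re_sum]
  refine Finset.sum_congr rfl fun j _ => ?_
  simp [Complex.mul_re]

lemma im_mulVec {d : ℕ} (A : Matrix (Fin d) (Fin d) ℝ) (w : Fin d → ℂ) :
    (fun i => (((A.map fun r : ℝ => (r : ℂ)).mulVec w) i).im)
      = A.mulVec (fun i => (w i).im) := by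
  funext i
  simp only [Matrix.mulVec, dotProduct, Matrix.map_apply, Complex.im_sum]
  refine Finset.sum_congr rfl fun j _ => ?_
  simp [Complex.mul_im]

lemma exists_eigenvector {d : ℕ} (B : Matrix (Fin d) (Fin d) ℂ) {μ : ℂ}
    (hμ : μ ∈ spectrum ℂ B) : ∃ v : Fin d → ℂ, v ≠ 0 ∧ B.mulVec v = μ • v := by
  have h : μ ∈ spectrum ℂ (Matrix.toLinAlgEquiv' B) := by
    rw [AlgEquiv.spectrum_eq]; exact hμ
  have he : Module.End.HasEigenvalue (Matrix.toLinAlgEquiv' B) μ :=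
    Module.End.hasEigenvalue_iff_mem_spectrum.mpr h
  obtain ⟨v, hv⟩ := he.exists_hasEigenvector
  refine ⟨v, hv.2, ?_⟩
  rw [← hv.apply_eq_smul, Matrix.toLinAlgEquiv'_apply]

lemma not_nilpotent_exists_ne_zero_spectrum {d : ℕ} (A : Matrix (Fin d) (Fin d) ℝ)
    (hA : ¬ IsNilpotent A) :
    ∃ μ ∈ spectrum ℂ (A.map fun r : ℝ => (r : ℂ)), μ ≠ 0 := by
  set B := A.map fun r : ℝ => (r : ℂ) with hB
  by_contra h
  push_neg at h
  apply hA
  set φ : Module.End ℂ (Fin d → ℂ) := Matrix.toLinAlgEquiv' B with hφ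
  have hφspec : spectrum ℂ φ = spectrum ℂ B := AlgEquiv.spectrum_eq _ _
  have hbot : ∀ μ : ℂ, μ ≠ 0 → φ.maxGenEigenspace μ = ⊥ := by
    intro μ hμ0
    by_contra hb
    have hUE : φ.HasUnifEigenvalue μ ⊤ := hb
    have : μ ∈ spectrum ℂ φ := (hUE.lt (m := 1) zero_lt_one).mem_spectrum
    exact hμ0 (h μ (hφspec ▸ this))
  have htop : φ.maxGenEigenspace 0 = ⊤ := by
    have hsup := Module.End.iSup_maxGenEigenspace_eq_top φ
    refine le_antisymm le_top ?_
    rw [← hsup]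
    refine iSup_le fun μ => ?_
    rcases eq_or_ne μ 0 with rfl | hμ
    · exact le_rfl
    · rw [hbot μ hμ]; exact bot_le
  have hnilφ : IsNilpotent φ := by
    rw [show IsNilpotent φ ↔ ∀ m : Fin d → ℂ, ∃ n : ℕ, (φ ^ n) m = 0 from
      (LinearMap.charpoly_nilpotent_tfae φ).out 0 2]
    intro m
    have hm : m ∈ φ.maxGenEigenspace 0 := htop ▸ Submodule.mem_top
    rw [Module.End.mem_maxGenEigenspace] at hm
    obtain ⟨k, hk⟩ := hm
    exact ⟨k, by simpa using hk⟩
  have hnilB : IsNilpotent B := by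
    obtain ⟨n, hn⟩ := hnilφ
    refine ⟨n, Matrix.toLinAlgEquiv'.injective ?_⟩
    rw [map_pow, map_zero]
    exact hn
  obtain ⟨n, hn⟩ := hnilB
  refine ⟨n, ?_⟩
  ext i j
  have : ((A ^ n) i j : ℂ) = 0 := by
    have h1 : (Complex.ofRealHom.mapMatrix (A ^ n) : Matrix (Fin d) (Fin d) ℂ) = 0 := by
      rw [map_pow]
      have : Complex.ofRealHom.mapMatrix A = B := rfl
      rw [this, hn]
    have := congrFun (congrFun (congrArg (fun M => (M : Matrix (Fin d) (Fin d) ℂ)) h1) i) j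
    simpa [RingHom.mapMatrix_apply, Matrix.map_apply] using this
  exact_mod_cast this


lemma key_lemma {d : ℕ} (A : Matrix (Fin d) (Fin d) ℝ)
    (τ : ℝ → ℝ) (hτ : ∀ t : ℝ, 0 ≤ t → 0 < τ t)
    (hinf : ∀ t : ℝ, 0 ≤ t → ∃ δ > (0 : ℝ), ∀ s ∈ Set.Icc (0 : ℝ) t, δ ≤ τ s)
    (hconv : ∀ x : ℝ → Fin d → ℝ,
      (∀ t : ℝ, 0 ≤ t → x t = A.mulVec (x (t - τ t))) →
      (∃ M : ℝ, ∀ t : ℝ, InNegDom τ t → ‖x t‖ ≤ M) →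
      Tendsto x atTop (𝓝 (0 : Fin d → ℝ)))
    {μ : ℂ} (hμ : μ ∈ spectrum ℂ (A.map fun r : ℝ => (r : ℂ))) (hμ0 : μ ≠ 0) :
    ‖μ‖ < 1 ∧ Tendsto (fun t : ℝ => t - τ t) atTop atTop := by
  set B := A.map fun r : ℝ => (r : ℂ) with hB
  obtain ⟨v, hv0, hveig⟩ : ∃ v : Fin d → ℂ, v ≠ 0 ∧ B.mulVec v = μ • v :=
    exists_eigenvector B hμ
  -- the backward step function
  set g : ℝ → ℝ := fun t => if 0 ≤ t then t - τ t else t with hg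
  have hg_neg : ∀ {t : ℝ}, t < 0 → g t = t := fun {t} ht => if_neg (not_le.mpr ht)
  have hg_pos : ∀ {t : ℝ}, 0 ≤ t → g t = t - τ t := fun {t} ht => if_pos ht
  have hg_le : ∀ t : ℝ, g t ≤ t := by
    intro t
    rcases le_or_gt 0 t with ht | ht
    · rw [hg_pos ht]; linarith [hτ t ht]
    · rw [hg_neg ht]
  -- iterates decrease while nonnegative
  have hiter : ∀ C : ℝ, 0 ≤ C → ∀ δ : ℝ, 0 < δ → (∀ s ∈ Set.Icc (0:ℝ) C, δ ≤ τ s) →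
      ∀ s : ℝ, s ≤ C → ∀ n : ℕ, 0 ≤ g^[n] s → g^[n] s ≤ s - n * δ := by
    intro C hC δ hδ hδle s hs n
    induction n with
    | zero => intro _; simp
    | succ n ih =>
      intro hpos
      have hn_pos : 0 ≤ g^[n] s := by
        by_contra hneg
        push_neg at hneg
        rw [Function.iterate_succ_apply', hg_neg hneg] at hpos
        exact absurd hpos (not_le.mpr hneg)
      have hle := ih hn_pos
      have hmem : g^[n] s ∈ Set.Icc (0:ℝ) C := by
        constructor
        · exact hn_pos
        · refine hle.trans ?_
          have : (0:ℝ) ≤ n * δ := by positivity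
          linarith
      have hτδ := hδle _ hmem
      rw [Function.iterate_succ_apply', hg_pos hn_pos]
      push_cast
      linarith
  -- the iterates eventually become negative
  have hex : ∀ s : ℝ, ∃ n : ℕ, g^[n] s < 0 := by
    intro s
    rcases lt_or_ge s 0 with hs | hs
    · exact ⟨0, hs⟩
    · obtain ⟨δ, hδ, hδle⟩ := hinf s hs
      obtain ⟨n, hn⟩ := exists_nat_gt (s / δ)
      refine ⟨n, ?_⟩
      by_contra hpos
      push_neg at hpos
      have := hiter s hs δ hδ hδle s le_rfl n hpos
      have hn' : s < n * δ := by
        rwa [div_lt_iff₀ hδ] at hn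
      linarith
  set k : ℝ → ℕ := fun s => Nat.find (hex s) with hk
  have hk_spec : ∀ s : ℝ, g^[k s] s < 0 := fun s => Nat.find_spec (hex s)
  have hk_min : ∀ s : ℝ, ∀ n : ℕ, g^[n] s < 0 → k s ≤ n := fun s n hn =>
    Nat.find_min' (hex s) hn
  have hk_zero : ∀ s : ℝ, s < 0 → k s = 0 := by
    intro s hs; exact Nat.le_zero.mp (hk_min s 0 hs)
  have hk_succ : ∀ t : ℝ, 0 ≤ t → k t = k (t - τ t) + 1 := by
    intro t ht
    rw [← hg_pos ht]
    have h1 : g^[k (g t) + 1] t < 0 := by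
      rw [Function.iterate_succ_apply]; exact hk_spec (g t)
    have h2 : k t ≤ k (g t) + 1 := hk_min t _ h1
    have h3 : k t ≠ 0 := by
      intro h0
      have := hk_spec t
      rw [h0] at this
      exact absurd this (not_lt.mpr ht)
    obtain ⟨c, hc⟩ := Nat.exists_eq_succ_of_ne_zero h3
    have h4 : g^[c] (g t) < 0 := by
      have h5 := hk_spec t
      rw [hc, Nat.succ_eq_add_one, Function.iterate_succ_apply] at h5
      exact h5
    have h5 : k (g t) ≤ c := hk_min (g t) c h4
    omega
  -- the complex solution
  set z : ℝ → Fin d → ℂ := fun t => μ ^ (k t) • v with hz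
  have hz_eq : ∀ t : ℝ, 0 ≤ t → z t = B.mulVec (z (t - τ t)) := by
    intro t ht
    rw [hz]
    simp only
    rw [Matrix.mulVec_smul, hveig, hk_succ t ht, smul_smul, ← pow_succ]
  have hz_neg : ∀ t : ℝ, t < 0 → z t = v := by
    intro t ht
    rw [hz]; simp only [hk_zero t ht, pow_zero, one_smul]
  -- real and imaginary parts are real solutions
  have hx1_eq : ∀ t : ℝ, 0 ≤ t →
      (fun i => (z t i).re) = A.mulVec (fun i => (z (t - τ t) i).re) := by
    intro t ht
    rw [← re_mulVec A (z (t - τ t)), ← hB]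
    exact congrArg (fun w => fun i => (w i).re) (hz_eq t ht)
  have hx2_eq : ∀ t : ℝ, 0 ≤ t →
      (fun i => (z t i).im) = A.mulVec (fun i => (z (t - τ t) i).im) := by
    intro t ht
    rw [← im_mulVec A (z (t - τ t)), ← hB]
    exact congrArg (fun w => fun i => (w i).im) (hz_eq t ht)
  have hbd1 : ∀ t : ℝ, InNegDom τ t → ‖(fun i => (z t i).re)‖ ≤ ‖v‖ := by
    intro t ht
    rw [hz_neg t ht.1]
    refine (pi_norm_le_iff_of_nonneg (norm_nonneg v)).mpr fun i => ?_
    calc ‖(v i).re‖ ≤ ‖v i‖ := by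
          rw [Real.norm_eq_abs]; exact Complex.abs_re_le_norm _
      _ ≤ ‖v‖ := norm_le_pi_norm v i
  have hbd2 : ∀ t : ℝ, InNegDom τ t → ‖(fun i => (z t i).im)‖ ≤ ‖v‖ := by
    intro t ht
    rw [hz_neg t ht.1]
    refine (pi_norm_le_iff_of_nonneg (norm_nonneg v)).mpr fun i => ?_
    calc ‖(v i).im‖ ≤ ‖v i‖ := by
          rw [Real.norm_eq_abs]; exact Complex.abs_im_le_norm _
      _ ≤ ‖v‖ := norm_le_pi_norm v i
  have h1 := hconv (fun t i => (z t i).re) hx1_eq ⟨‖v‖, hbd1⟩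
  have h2 := hconv (fun t i => (z t i).im) hx2_eq ⟨‖v‖, hbd2⟩
  -- pick a nonzero coordinate of v
  obtain ⟨j, hj⟩ : ∃ j, v j ≠ 0 := by
    by_contra hc
    push_neg at hc
    exact hv0 (funext hc)
  have h1j : Tendsto (fun t => (z t j).re) atTop (𝓝 (0:ℝ)) := by
    have := tendsto_pi_nhds.mp h1 j
    simpa using this
  have h2j : Tendsto (fun t => (z t j).im) atTop (𝓝 (0:ℝ)) := by
    have := tendsto_pi_nhds.mp h2 j
    simpa using this
  have hzj : Tendsto (fun t => z t j) atTop (𝓝 (0:ℂ)) := by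
    have hre : Tendsto (fun t => ((z t j).re : ℂ)) atTop (𝓝 ((0:ℝ):ℂ)) :=
      (Complex.continuous_ofReal.tendsto _).comp h1j
    have him : Tendsto (fun t => ((z t j).im : ℂ)) atTop (𝓝 ((0:ℝ):ℂ)) :=
      (Complex.continuous_ofReal.tendsto _).comp h2j
    have := hre.add (him.mul_const Complex.I)
    simp only [Complex.ofReal_zero, zero_mul, add_zero] at this
    refine this.congr fun t => ?_
    exact Complex.re_add_im _
  have hμk : Tendsto (fun t => μ ^ (k t)) atTop (𝓝 (0:ℂ)) := by
    have hzj' : (fun t => z t j) = fun t => μ ^ (k t) * v j := by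
      funext t; rw [hz]; simp [Pi.smul_apply, smul_eq_mul]
    rw [hzj'] at hzj
    have := hzj.mul_const (v j)⁻¹
    simp only [zero_mul] at this
    refine this.congr fun t => ?_
    field_simp
  have hnorm : Tendsto (fun t => ‖μ‖ ^ (k t)) atTop (𝓝 (0:ℝ)) := by
    have := hμk.norm
    simpa [norm_pow] using this
  have hμlt : ‖μ‖ < 1 := by
    by_contra hge
    push_neg at hge
    have hev : ∀ᶠ t : ℝ in atTop, ‖μ‖ ^ (k t) < 1 :=
      hnorm.eventually_lt_const one_pos
    obtain ⟨t, ht⟩ := hev.exists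
    have : (1:ℝ) ≤ ‖μ‖ ^ (k t) := one_le_pow₀ hge
    linarith
  refine ⟨hμlt, ?_⟩
  have hμpos : 0 < ‖μ‖ := norm_pos_iff.mpr hμ0
  have hkTop : Tendsto k atTop atTop := by
    rw [tendsto_atTop]
    intro N
    have hev : ∀ᶠ t : ℝ in atTop, ‖μ‖ ^ (k t) < ‖μ‖ ^ N :=
      hnorm.eventually_lt_const (pow_pos hμpos N)
    filter_upwards [hev] with t ht
    exact le_of_lt ((pow_lt_pow_iff_right_of_lt_one₀ hμpos hμlt).mp ht)
  rw [tendsto_atTop]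
  by_contra hC
  push_neg at hC
  obtain ⟨C, hCfreq⟩ := hC
  have hCfreq' : ∃ᶠ t : ℝ in atTop, t - τ t < C := by
    refine hCfreq.mono fun t ht => ?_
    exact ht
  set C' := max C 0 with hC'
  obtain ⟨δ, hδ, hδle⟩ := hinf C' (le_max_right _ _)
  obtain ⟨N, hN⟩ := exists_nat_gt (C' / δ)
  have hNδ : C' < N * δ := by rwa [div_lt_iff₀ hδ] at hN
  have hbound : ∀ s : ℝ, s ≤ C' → k s ≤ N := by
    intro s hs
    refine hk_min s N ?_
    by_contra hpos
    push_neg at hpos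
    have := hiter C' (le_max_right _ _) δ hδ hδle s hs N hpos
    linarith
  have hev : ∀ᶠ t : ℝ in atTop, (N + 2 ≤ k t ∧ 0 ≤ t) :=
    (hkTop.eventually_ge_atTop (N + 2)).and (eventually_ge_atTop 0)
  obtain ⟨t, htC, htk, ht0⟩ := (hCfreq'.and_eventually hev).exists
  have : k t = k (t - τ t) + 1 := hk_succ t ht0
  have hkb : k (t - τ t) ≤ N := hbound _ (le_trans htC.le (le_max_left _ _))
  omega

/-- Necessity of the stability conditions: if every solution of `x(t) = A·x(t − τ(t))` with
bounded initial condition converges to `0` at `+∞`, then the spectral radius of `A` is `< 1`;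
if moreover `A` is not nilpotent, then `t − τ(t) → +∞`. -/
theorem stmt_17 {d : ℕ} (A : Matrix (Fin d) (Fin d) ℝ)
    (τ : ℝ → ℝ) (hτ : ∀ t : ℝ, 0 ≤ t → 0 < τ t)
    (hinf : ∀ t : ℝ, 0 ≤ t → ∃ δ > (0 : ℝ), ∀ s ∈ Set.Icc (0 : ℝ) t, δ ≤ τ s)
    (hconv : ∀ x : ℝ → Fin d → ℝ,
      (∀ t : ℝ, 0 ≤ t → x t = A.mulVec (x (t - τ t))) →
      (∃ M : ℝ, ∀ t : ℝ, InNegDom τ t → ‖x t‖ ≤ M) →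
      Tendsto x atTop (𝓝 (0 : Fin d → ℝ))) :
    spectralRadius ℂ (A.map fun r : ℝ => (r : ℂ)) < 1 ∧
      (¬ IsNilpotent A → Tendsto (fun t : ℝ => t - τ t) atTop atTop) := by
  constructor
  · set B := A.map fun r : ℝ => (r : ℂ) with hB
    have hall : ∀ μ ∈ spectrum ℂ B, (‖μ‖₊ : ENNReal) < 1 := by
      intro μ hμ
      rcases eq_or_ne μ 0 with rfl | h0
      · simp
      · have hlt := (key_lemma A τ hτ hinf hconv hμ h0).1
        rw [show (1:ENNReal) = ((1:NNReal):ENNReal) from rfl, ENNReal.coe_lt_coe,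
          ← NNReal.coe_lt_coe, coe_nnnorm, NNReal.coe_one]
        exact hlt
    have hfin := Matrix.finite_spectrum B
    have hle : spectralRadius ℂ B ≤ hfin.toFinset.sup (fun μ => (‖μ‖₊ : ENNReal)) := by
      rw [spectralRadius]
      refine iSup₂_le fun μ hμ => ?_
      exact Finset.le_sup (f := fun μ => (‖μ‖₊ : ENNReal)) (hfin.mem_toFinset.mpr hμ)
    refine lt_of_le_of_lt hle ?_
    rw [Finset.sup_lt_iff (by simp : (⊥:ENNReal) < 1)]
    intro μ hμ
    exact hall μ (hfin.mem_toFinset.mp hμ)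
  · intro hA
    obtain ⟨μ, hμ, h0⟩ := not_nilpotent_exists_ne_zero_spectrum A hA
    exact (key_lemma A τ hτ hinf hconv hμ h0).2
end

section
/- Let A be a real d×d matrix with ρ(A) < 1, and τ a delay function satisfying inf_{s∈[0,t]} τ(s) > 0 for all t ≥ 0, such that there exist α > 0 and β ∈ ℝ with n(t) ≥ α·t + β for every t ≥ 0. Then there exist constants C > 0 and γ > 0 such that for every solution x of x(t) = A·x(t − τ(t)) with bounded initial condition x₀: [−h(0), 0) → ℝ^d, we have |x(t)| ≤ C·e^{−γt}·sup_{s ∈ [−h(0),0)} |x₀(s)| for all t ≥ 0. -/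
open Set

lemma mem_Dset_iff (τ : ℝ → ℝ) (n : ℕ) (t : ℝ) :
    t ∈ Dset τ n ↔ ∀ k < n, 0 ≤ iterDelay τ k t := by
  induction n generalizing t with
  | zero => simp [Dset]
  | succ n ih =>
    constructor
    · rintro ⟨ht, hmem⟩ k hk
      cases k with
      | zero => exact ht
      | succ k => exact (ih (t - τ t)).mp hmem k (Nat.lt_of_succ_lt_succ hk)
    · intro h
      refine ⟨h 0 (Nat.succ_pos n), (ih (t - τ t)).mpr fun k hk => ?_⟩
      exact h (k + 1) (Nat.succ_lt_succ hk)

/-- Representation of solutions: iterating the functional equation. -/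
lemma solution_rep {d : ℕ} (A : Matrix (Fin d) (Fin d) ℝ) (τ : ℝ → ℝ)
    (x : ℝ → Fin d → ℝ) (hx : ∀ t : ℝ, 0 ≤ t → x t = A.mulVec (x (t - τ t))) :
    ∀ n : ℕ, ∀ t : ℝ, (∀ k < n, 0 ≤ iterDelay τ k t) →
      x t = (A ^ n).mulVec (x (iterDelay τ n t)) := by
  intro n
  induction n with
  | zero => intro t _; simp [iterDelay, Matrix.one_mulVec]
  | succ n ih =>
    intro t h
    have ht : 0 ≤ t := h 0 (Nat.succ_pos n)
    have h' : ∀ k < n, 0 ≤ iterDelay τ k (t - τ t) := fun k hk =>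
      h (k + 1) (Nat.succ_lt_succ hk)
    rw [hx t ht, ih (t - τ t) h', Matrix.mulVec_mulVec, ← pow_succ']
    rfl

/-- A matrix with spectral radius `< 1` has geometrically decaying powers
(in the `L∞`-operator norm). -/
lemma pow_norm_decay {d : ℕ} (B : Matrix (Fin d) (Fin d) ℂ)
    (hB : spectralRadius ℂ B < 1) :
    ∃ C > (0 : ℝ), ∃ r : ℝ, 0 < r ∧ r < 1 ∧ ∀ n : ℕ,
      @norm _ Matrix.linftyOpNormedAddCommGroup.toNorm (B ^ n) ≤ C * r ^ n := by
  letI := Matrix.linftyOpNormedRing (α := ℂ) (n := Fin d)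
  letI := Matrix.linftyOpNormedAlgebra (R := ℂ) (α := ℂ) (n := Fin d)
  -- Gelfand's formula gives some power of norm `< 1`
  have hgel := spectrum.pow_nnnorm_pow_one_div_tendsto_nhds_spectralRadius B
  have hev : ∀ᶠ n : ℕ in Filter.atTop, (‖B ^ n‖₊ : ENNReal) ^ (1 / (n : ℝ)) < 1 :=
    hgel.eventually_lt_const hB
  obtain ⟨N, hN1, hNlt⟩ : ∃ N : ℕ, 1 ≤ N ∧ (‖B ^ N‖₊ : ENNReal) ^ (1 / (N : ℝ)) < 1 := by
    obtain ⟨N₀, hN₀⟩ := hev.exists_forall_of_atTop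
    exact ⟨max N₀ 1, le_max_right _ _, hN₀ _ (le_max_left _ _)⟩
  have hNpos : (0 : ℝ) < (N : ℝ) := by exact_mod_cast hN1
  have hnorm_lt : ‖B ^ N‖ < 1 := by
    by_contra hge
    push_neg at hge
    have h1 : (1 : ENNReal) ≤ (‖B ^ N‖₊ : ENNReal) := by
      rw [← ENNReal.coe_one, ENNReal.coe_le_coe]
      exact_mod_cast hge
    have : (1 : ENNReal) ≤ (‖B ^ N‖₊ : ENNReal) ^ (1 / (N : ℝ)) := by
      calc (1 : ENNReal) = 1 ^ (1 / (N : ℝ)) := (ENNReal.one_rpow _).symm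
        _ ≤ (‖B ^ N‖₊ : ENNReal) ^ (1 / (N : ℝ)) :=
          ENNReal.rpow_le_rpow h1 (by positivity)
    exact absurd hNlt this.not_gt
  -- set up the geometric bound
  set b : ℝ := max ‖B ^ N‖ (1 / 2) with hb
  have hb_pos : 0 < b := lt_max_of_lt_right (by norm_num)
  have hb_lt : b < 1 := max_lt hnorm_lt (by norm_num)
  have hbB : ‖B ^ N‖ ≤ b := le_max_left _ _
  set r : ℝ := b ^ (1 / (N : ℝ)) with hr
  have hr_pos : 0 < r := Real.rpow_pos_of_pos hb_pos _
  have hr_lt : r < 1 := Real.rpow_lt_one hb_pos.le hb_lt (by positivity)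
  have hrN : r ^ N = b := by
    rw [hr, ← Real.rpow_natCast (b ^ (1 / (N : ℝ))) N, ← Real.rpow_mul hb_pos.le,
      one_div_mul_cancel hNpos.ne', Real.rpow_one]
  set K : ℝ := ∑ s ∈ Finset.range N, ‖B ^ s‖ with hK
  have hK_bound : ∀ s < N, ‖B ^ s‖ ≤ K := fun s hs =>
    Finset.single_le_sum (fun i _ => norm_nonneg _) (Finset.mem_range.mpr hs)
  have hrN_pos : (0 : ℝ) < r ^ N := pow_pos hr_pos N
  refine ⟨K / r ^ N + 1, by positivity, r, hr_pos, hr_lt, fun n => ?_⟩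
  obtain ⟨q, s, hs_lt, hn_eq⟩ : ∃ q s : ℕ, s < N ∧ n = N * q + s :=
    ⟨n / N, n % N, Nat.mod_lt _ (by omega), (Nat.div_add_mod n N).symm ▸ rfl⟩
  have hq : ∀ m : ℕ, ∀ E : Matrix (Fin d) (Fin d) ℂ, ‖(B ^ N) ^ m * E‖ ≤ b ^ m * ‖E‖ := by
    intro m
    induction m with
    | zero => intro E; simp
    | succ m ih =>
      intro E
      calc ‖(B ^ N) ^ (m + 1) * E‖ = ‖B ^ N * ((B ^ N) ^ m * E)‖ := by
            rw [pow_succ']; rw [mul_assoc]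
        _ ≤ ‖B ^ N‖ * ‖(B ^ N) ^ m * E‖ := norm_mul_le _ _
        _ ≤ b * (b ^ m * ‖E‖) := by
            refine mul_le_mul hbB (ih E) (norm_nonneg _) hb_pos.le
        _ = b ^ (m + 1) * ‖E‖ := by ring
  have key : ‖B ^ n‖ ≤ b ^ q * K := by
    calc ‖B ^ n‖ = ‖(B ^ N) ^ q * B ^ s‖ := by rw [← pow_mul, ← pow_add, ← hn_eq]
      _ ≤ b ^ q * ‖B ^ s‖ := hq q _
      _ ≤ b ^ q * K := mul_le_mul_of_nonneg_left (hK_bound s hs_lt) (pow_nonneg hb_pos.le q)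
  have hbq : b ^ q ≤ r ^ n / r ^ N := by
    have h1 : b ^ q = r ^ (N * q) := by rw [← hrN, ← pow_mul]
    have h2 : r ^ n = r ^ (N * q) * r ^ s := by rw [hn_eq, pow_add]
    have h3 : r ^ N ≤ r ^ s := pow_le_pow_of_le_one hr_pos.le hr_lt.le (by omega)
    rw [h1, le_div_iff₀ hrN_pos, h2]
    exact mul_le_mul_of_nonneg_left h3 (pow_nonneg hr_pos.le _)
  calc ‖B ^ n‖ ≤ b ^ q * K := key
    _ ≤ (r ^ n / r ^ N) * K := by
        refine mul_le_mul_of_nonneg_right hbq ?_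
        have : (0:ℝ) ≤ ‖(B:Matrix (Fin d) (Fin d) ℂ) ^ 0‖ := norm_nonneg _
        exact le_trans this (hK_bound 0 (by omega))
    _ = (K / r ^ N) * r ^ n := by ring
    _ ≤ (K / r ^ N + 1) * r ^ n := by
        refine mul_le_mul_of_nonneg_right ?_ (pow_nonneg hr_pos.le _)
        linarith

/-- Exponential decay: if the spectral radius of `A` is `< 1`, `τ` is a delay function with
`inf_{s ∈ [0,t]} τ(s) > 0` for all `t ≥ 0`, and `n(t) ≥ α·t + β` for some `α > 0`, `β ∈ ℝ`
and all `t ≥ 0`, then there are `C > 0` and `γ > 0` such that every solution `x` of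
`x(t) = A·x(t − τ(t))` with initial condition bounded by `M` on `[−h(0), 0)` satisfies
`|x(t)| ≤ C·e^{−γt}·M` for all `t ≥ 0`. -/
theorem stmt_19 {d : ℕ} (A : Matrix (Fin d) (Fin d) ℝ)
    (hA : spectralRadius ℂ (A.map fun r : ℝ => (r : ℂ)) < 1)
    (τ : ℝ → ℝ) (hτ : ∀ t : ℝ, 0 ≤ t → 0 < τ t)
    (hinf : ∀ t : ℝ, 0 ≤ t → ∃ δ > (0 : ℝ), ∀ s ∈ Set.Icc (0 : ℝ) t, δ ≤ τ s)
    (nfun : ℝ → ℕ) (hn : ∀ t : ℝ, t ∈ Dset τ (nfun t) ∧ t ∉ Dset τ (nfun t + 1))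
    (α β : ℝ) (hα : 0 < α) (hlb : ∀ t : ℝ, 0 ≤ t → α * t + β ≤ (nfun t : ℝ)) :
    ∃ C > (0 : ℝ), ∃ γ > (0 : ℝ), ∀ x : ℝ → Fin d → ℝ,
      (∀ t : ℝ, 0 ≤ t → x t = A.mulVec (x (t - τ t))) →
      ∀ M : ℝ, (∀ s : ℝ, InNegDom τ s → ‖x s‖ ≤ M) →
      ∀ t : ℝ, 0 ≤ t → ‖x t‖ ≤ C * Real.exp (-γ * t) * M := by
  classical
  set B : Matrix (Fin d) (Fin d) ℂ := A.map fun r : ℝ => (r : ℂ) with hBdef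
  obtain ⟨C₀, hC₀, r, hr_pos, hr_lt, hpow⟩ := pow_norm_decay B hA
  have hlog_neg : Real.log r < 0 := Real.log_neg hr_pos hr_lt
  set γ : ℝ := α * (-Real.log r) with hγdef
  have hγ : 0 < γ := mul_pos hα (by linarith)
  set C : ℝ := C₀ * Real.exp (β * Real.log r) with hCdef
  have hC : 0 < C := mul_pos hC₀ (Real.exp_pos _)
  refine ⟨C, hC, γ, hγ, fun x hx M hM t ht => ?_⟩
  -- basic facts about nfun at a nonnegative time
  have hfacts : ∀ u : ℝ, 0 ≤ u →
      (∀ k < nfun u, 0 ≤ iterDelay τ k u) ∧ iterDelay τ (nfun u) u < 0 := by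
    intro u hu
    obtain ⟨hmem, hnmem⟩ := hn u
    have h1 : ∀ k < nfun u, 0 ≤ iterDelay τ k u := (mem_Dset_iff τ _ u).mp hmem
    refine ⟨h1, ?_⟩
    by_contra hge
    push_neg at hge
    refine hnmem ((mem_Dset_iff τ _ u).mpr fun k hk => ?_)
    rcases Nat.lt_succ_iff_lt_or_eq.mp hk with h | h
    · exact h1 k h
    · exact h ▸ hge
  -- the iterated delay lands in the negative domain
  have hInNeg : ∀ u : ℝ, 0 ≤ u → InNegDom τ (iterDelay τ (nfun u) u) := by
    intro u hu
    obtain ⟨h1, h2⟩ := hfacts u hu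
    refine ⟨h2, fun m hm => ?_⟩
    have hpos : 0 < nfun u := by
      rcases Nat.eq_zero_or_pos (nfun u) with h | h
      · exfalso; rw [h] at h2; exact absurd hu (not_le.mpr h2)
      · exact h
    obtain ⟨k, hk⟩ : ∃ k, nfun u = k + 1 := ⟨nfun u - 1, by omega⟩
    have hk_nn : 0 ≤ iterDelay τ k u := h1 k (by omega)
    have := hm (iterDelay τ k u) hk_nn
    rwa [hk, iterDelay_succ' τ k u]
  -- M is nonnegative
  have hM0 : 0 ≤ M :=
    le_trans (norm_nonneg _) (hM _ (hInNeg 0 le_rfl))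
  -- solution representation at time t
  obtain ⟨h1, _⟩ := hfacts t ht
  set n : ℕ := nfun t with hndef
  have hrep : x t = (A ^ n).mulVec (x (iterDelay τ n t)) :=
    solution_rep A τ x hx n t h1
  set v : Fin d → ℝ := x (iterDelay τ n t) with hvdef
  have hvM : ‖v‖ ≤ M := hM _ (hInNeg t ht)
  -- complexify and estimate
  letI : NormedAddCommGroup (Matrix (Fin d) (Fin d) ℂ) := Matrix.linftyOpNormedAddCommGroup
  set w : Fin d → ℂ := fun i => ((v i : ℝ) : ℂ) with hwdef
  have hwv : ‖w‖ = ‖v‖ := by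
    simp only [Pi.norm_def, Pi.nnnorm_def]
    congr 1
    apply Finset.sup_congr rfl
    intro i _
    simp [hwdef]
  have hBn : B ^ n = (A ^ n).map fun r : ℝ => (r : ℂ) := by
    have : B = (Complex.ofRealHom.mapMatrix : Matrix (Fin d) (Fin d) ℝ →+* _) A := rfl
    rw [this, ← map_pow]
    rfl
  have hmvc : ∀ i, (((A ^ n).mulVec v i : ℝ) : ℂ) = (B ^ n).mulVec w i := by
    intro i
    rw [hBn]
    exact (Complex.ofRealHom : ℝ →+* ℂ).map_mulVec (A ^ n) v i
  have hnorm_eq : ‖(A ^ n).mulVec v‖ = ‖(B ^ n).mulVec w‖ := by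
    simp only [Pi.norm_def, Pi.nnnorm_def]
    congr 1
    apply Finset.sup_congr rfl
    intro i _
    rw [← hmvc i]
    simp
  have hbound : ‖x t‖ ≤ C₀ * r ^ n * M := by
    rw [hrep, hnorm_eq]
    calc ‖(B ^ n).mulVec w‖ ≤ ‖B ^ n‖ * ‖w‖ := Matrix.linfty_opNorm_mulVec _ _
      _ ≤ (C₀ * r ^ n) * M := by
          refine mul_le_mul (hpow n) ?_ (norm_nonneg _) ?_
          · rw [hwv]; exact hvM
          · positivity
      _ = C₀ * r ^ n * M := by ring
  -- exponential estimate
  have hrn : r ^ n = Real.exp ((n : ℝ) * Real.log r) := by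
    rw [Real.exp_nat_mul, Real.exp_log hr_pos]
  have hexp_le : r ^ n ≤ Real.exp ((α * t + β) * Real.log r) := by
    rw [hrn]
    apply Real.exp_le_exp.mpr
    have hnt : α * t + β ≤ (n : ℝ) := hlb t ht
    nlinarith [hnt, hlog_neg]
  have hfinal : C₀ * r ^ n * M ≤ C * Real.exp (-γ * t) * M := by
    have : C * Real.exp (-γ * t) = C₀ * Real.exp ((α * t + β) * Real.log r) := by
      rw [hCdef, hγdef, mul_assoc, ← Real.exp_add]
      congr 2
      ring
    rw [this]
    refine mul_le_mul_of_nonneg_right ?_ hM0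
    exact mul_le_mul_of_nonneg_left hexp_le hC₀.le
  exact hbound.trans hfinal
end
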